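/- arXiv:2406.04877 — 2 statements merged into one kernel-verified Lean document; each statement's English description precedes it below -/
import Mathlib

section
/- Let D be a directed graph and let a, b be vertices of D. Let P be a directed a–b path and Q a directed b–a path in D such that P and Q are laced. Then the union P ∪ Q has a butterfly minor that is a double path with endpoints a and b. -/
/-!
Common definitions: directed graphs as vertex/edge sets, directed paths and
walks, rays, arborescences, tree-like models and butterfly minors, laced
paths, knit rays, and the shapes (dominated directed rays, stars, combs,
chains of triangles) from the paper.
-/

universe u

/-- A directed graph on an ambient vertex type `V`, given by a set of vertices
and a set of directed edges (ordered pairs of vertices). -/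
structure DGraph (V : Type u) where
  verts : Set V
  edges : Set (V × V)

namespace DGraph

variable {V : Type u}

instance : Union (DGraph V) := ⟨fun G H => ⟨G.verts ∪ H.verts, G.edges ∪ H.edges⟩⟩
instance : Inter (DGraph V) := ⟨fun G H => ⟨G.verts ∩ H.verts, G.edges ∩ H.edges⟩⟩
instance : HasSubset (DGraph V) := ⟨fun H G => H.verts ⊆ G.verts ∧ H.edges ⊆ G.edges⟩
instance : EmptyCollection (DGraph V) := ⟨⟨∅, ∅⟩⟩

/-- The union of a family of directed graphs. -/
def iUnion {ι : Type} (f : ι → DGraph V) : DGraph V :=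
  ⟨⋃ i, (f i).verts, ⋃ i, (f i).edges⟩

/-- The directed graph obtained by reversing the orientation of every edge. -/
def reverse (G : DGraph V) : DGraph V := ⟨G.verts, {e | (e.2, e.1) ∈ G.edges}⟩

/-- The directed graph consisting of a single vertex and no edges. -/
def single (v : V) : DGraph V := ⟨{v}, ∅⟩

/-- Two vertices joined by both directed edges. -/
def linkBoth (a b : V) : DGraph V := ⟨{a, b}, {(a, b), (b, a)}⟩

/-- A directed triangle (directed cycle of length 3) on `a, b, c`. -/
def triangle (a b c : V) : DGraph V := ⟨{a, b, c}, {(a, b), (b, c), (c, a)}⟩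

/-- The directed graph of a list of vertices with its consecutive edges. -/
def ofList (l : List V) : DGraph V := ⟨{v | v ∈ l}, {e | e ∈ l.zip l.tail}⟩

/-- `𝒟(P)` for the (undirected) path `P` given by the list `l`:
the double path on `l`. -/
def doubleOfList (l : List V) : DGraph V := ofList l ∪ (ofList l).reverse

/-- The directed cycle through the vertices of `l` in order. -/
def cycleOfList (l : List V) : DGraph V :=
  ⟨{v | v ∈ l}, {e | e ∈ l.zip (l.tail ++ l.take 1)}⟩

/-- `G` is a directed cycle. -/
def IsDirectedCycle (G : DGraph V) : Prop :=
  ∃ l : List V, l.Nodup ∧ 2 ≤ l.length ∧ G = cycleOfList l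

/-- The out-oriented ray with vertices `f 0, f 1, …`, rooted at `f 0`. -/
def outRay (f : ℕ → V) : DGraph V :=
  ⟨Set.range f, {e | ∃ n, e = (f n, f (n + 1))}⟩

/-- The in-oriented ray with vertices `f 0, f 1, …`, rooted at `f 0`. -/
def inRay (f : ℕ → V) : DGraph V :=
  ⟨Set.range f, {e | ∃ n, e = (f (n + 1), f n)}⟩

/-- `𝒟(R)` for the undirected ray `R` with vertices `f 0, f 1, …`. -/
def doubleRay (f : ℕ → V) : DGraph V := outRay f ∪ inRay f

/-- The dominated directed ray on an out-oriented ray: the out-oriented ray `f`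
rooted at `f 0` together with the edges `(f (n+1), f 0)`. -/
def domOutRay (f : ℕ → V) : DGraph V :=
  ⟨Set.range f, {e | ∃ n, e = (f n, f (n + 1))} ∪ {e | ∃ n, e = (f (n + 1), f 0)}⟩

/-- The dominated directed ray on an in-oriented ray: the in-oriented ray `f`
rooted at `f 0` together with the edges `(f 0, f (n+1))`. -/
def domInRay (f : ℕ → V) : DGraph V :=
  ⟨Set.range f, {e | ∃ n, e = (f (n + 1), f n)} ∪ {e | ∃ n, e = (f 0, f (n + 1))}⟩

/-- `G` is a dominated directed ray. -/
def IsDominatedDirectedRay (G : DGraph V) : Prop :=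
  ∃ f : ℕ → V, Function.Injective f ∧ (G = domOutRay f ∨ G = domInRay f)

/-- The internal vertices of a path or walk given as a list. -/
def internals (l : List V) : List V := l.tail.dropLast

/-- `l` is a directed path in `G`. -/
def IsPath (G : DGraph V) (l : List V) : Prop :=
  l ≠ [] ∧ l.Nodup ∧ (∀ v ∈ l, v ∈ G.verts) ∧ ∀ e ∈ l.zip l.tail, e ∈ G.edges

/-- `l` is a directed path in `G` with startvertex `a` and endvertex `b`. -/
def IsPathFrom (G : DGraph V) (a b : V) (l : List V) : Prop :=
  IsPath G l ∧ l.head? = some a ∧ l.getLast? = some b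

/-- There is a directed `a`–`b` path in `G`. -/
def Reaches (G : DGraph V) (a b : V) : Prop := ∃ l, IsPathFrom G a b l

/-- `G` is strongly connected. -/
def StronglyConnected (G : DGraph V) : Prop :=
  ∀ a ∈ G.verts, ∀ b ∈ G.verts, Reaches G a b

/-- `l` is a directed `X`–`Y` path in `G`: it starts in `X`, ends in `Y` and
has no internal vertex in `X ∪ Y`. -/
def IsXYPath (G : DGraph V) (X Y : Set V) (l : List V) : Prop :=
  IsPath G l ∧ (∃ a ∈ X, l.head? = some a) ∧ (∃ b ∈ Y, l.getLast? = some b) ∧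
    ∀ v ∈ internals l, v ∉ X ∪ Y

/-- `T` is an in-arborescence rooted at `r`: its underlying graph is a tree
and all edges are directed towards the root `r`. -/
def IsInArborescence (T : DGraph V) (r : V) : Prop :=
  r ∈ T.verts ∧ (∀ e ∈ T.edges, e.1 ∈ T.verts ∧ e.2 ∈ T.verts) ∧
  (∀ w, (r, w) ∉ T.edges) ∧ (∀ v ∈ T.verts, v ≠ r → ∃! w, (v, w) ∈ T.edges) ∧
  (∀ v ∈ T.verts, Reaches T v r)

/-- `T` is an out-arborescence rooted at `r`. -/
def IsOutArborescence (T : DGraph V) (r : V) : Prop := IsInArborescence T.reverse r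

/-- `v` is a leaf of the in-arborescence `T` rooted at `r`. -/
def IsLeafOfInArb (T : DGraph V) (r v : V) : Prop :=
  v ∈ T.verts ∧ v ≠ r ∧ ∀ u, (u, v) ∉ T.edges

/-- `v` is a leaf of the out-arborescence `T` rooted at `r`. -/
def IsLeafOfOutArb (T : DGraph V) (r v : V) : Prop := IsLeafOfInArb T.reverse r v

/-- A tree-like model of `H` in `D`; every vertex of `H` is identified with the
common root of the in- and out-arborescence of its branch set. -/
structure TreeLikeModel (D H : DGraph V) where
  bag : V → DGraph V
  tin : V → DGraph V
  tout : V → DGraph V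
  emap : V × V → V × V
  bag_sub : ∀ v ∈ H.verts, bag v ⊆ D
  bag_disjoint : ∀ v ∈ H.verts, ∀ w ∈ H.verts, v ≠ w → (bag v).verts ∩ (bag w).verts = ∅
  bag_eq : ∀ v ∈ H.verts, bag v = tin v ∪ tout v
  tin_arb : ∀ v ∈ H.verts, IsInArborescence (tin v) v
  tout_arb : ∀ v ∈ H.verts, IsOutArborescence (tout v) v
  roots_eq : ∀ v ∈ H.verts, (tin v).verts ∩ (tout v).verts = {v}
  emap_mem : ∀ e ∈ H.edges, emap e ∈ D.edges
  emap_tail : ∀ e ∈ H.edges, (emap e).1 ∈ (tout e.1).verts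
  emap_head : ∀ e ∈ H.edges, (emap e).2 ∈ (tin e.2).verts

/-- `H` is a butterfly minor of `D`. -/
def IsButterflyMinor (D H : DGraph V) : Prop := Nonempty (TreeLikeModel D H)

/-- `G` is a double path (`𝒟(P)` for an undirected path `P`) with endpoints
`a` and `b`. -/
def IsDoublePath (G : DGraph V) (a b : V) : Prop :=
  ∃ l : List V, l.Nodup ∧ l.head? = some a ∧ l.getLast? = some b ∧ G = doubleOfList l

/-- `G = 𝒟(S)` for a subdivided star `S` with infinitely many leaves, with
centre `c` and branches `q n`; `teeth` is the set of leaves of `S`. -/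
def IsDSubdividedStar (G : DGraph V) (teeth : Set V) : Prop :=
  ∃ (c : V) (q : ℕ → List V),
    (∀ n, (q n).Nodup ∧ (q n).head? = some c ∧ 2 ≤ (q n).length) ∧
    (∀ m n, m ≠ n → ∀ v, v ∈ q m → v ∈ q n → v = c) ∧
    G = iUnion (fun n => doubleOfList (q n)) ∧
    teeth = {v | ∃ n, (q n).getLast? = some v}

/-- `G` is obtained from `𝒟(S)` for a subdivided star `S` by replacing the
centre of infinite degree by a dominated directed ray. -/
def IsRayCentreStar (G : DGraph V) (teeth : Set V) : Prop :=
  ∃ (f : ℕ → V) (R : DGraph V) (g : ℕ → V) (q : ℕ → List V),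
    Function.Injective f ∧ (R = domOutRay f ∨ R = domInRay f) ∧
    (∀ n, (q n).Nodup ∧ (q n).head? = some (g n)) ∧
    (∀ n, ∀ v ∈ q n, v ∉ Set.range f) ∧
    (∀ m n, m ≠ n → ∀ v ∈ q m, v ∉ q n) ∧
    G = R ∪ iUnion (fun n => doubleOfList (q n) ∪ linkBoth (f n) (g n)) ∧
    teeth = {v | ∃ n, (q n).getLast? = some v}

/-- `G` is shaped by a star, with set of teeth `teeth`. -/
def IsShapedByStar (G : DGraph V) (teeth : Set V) : Prop :=
  (IsDominatedDirectedRay G ∧ teeth = G.verts) ∨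
  IsDSubdividedStar G teeth ∨ IsRayCentreStar G teeth

/-- `G = 𝒟(C)` for a comb `C` with spine `f`, branches `q n` attached at
`f (α n)`; `teeth` is the set of teeth of `C`. -/
def IsDComb (G : DGraph V) (teeth : Set V) : Prop :=
  ∃ (f : ℕ → V) (α : ℕ → ℕ) (q : ℕ → List V),
    Function.Injective f ∧ Function.Injective α ∧
    (∀ n, (q n).Nodup ∧ (q n).head? = some (f (α n))) ∧
    (∀ n, ∀ v ∈ (q n).tail, v ∉ Set.range f) ∧
    (∀ m n, m ≠ n → ∀ v ∈ q m, v ∉ q n) ∧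
    G = doubleRay f ∪ iUnion (fun n => doubleOfList (q n)) ∧
    teeth = {v | ∃ n, (q n).getLast? = some v}

/-- The double path on `l` together with both edges between `b` and the first
vertex of `l` (empty if `l` is empty). -/
def branchGraph (b : V) (l : List V) : DGraph V :=
  match l with
  | [] => ∅
  | h :: _ => doubleOfList l ∪ linkBoth b h

/-- `G` is obtained from `𝒟(C)` for a comb `C` by replacing each junction of
`C` by a directed cycle of length 3 as described in the paper.  Position `k`
of the spine is replaced by the piece `S k` (a single vertex, or a directed
triangle at junctions), with `L k`, `R k`, `B k` the vertices of `S k` to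
which the left spine part, the right spine part and the branch attach, and
`t n` the tooth of branch `n`. -/
def IsTriangleComb (G : DGraph V) (teeth : Set V) : Prop :=
  ∃ (α : ℕ → ℕ) (q : ℕ → List V) (S : ℕ → DGraph V) (L R B : ℕ → V) (t : ℕ → V),
    Function.Injective α ∧
    (∀ j k, j ≠ k → (S j).verts ∩ (S k).verts = ∅) ∧
    (∀ n, (q n).Nodup) ∧
    (∀ m n, m ≠ n → ∀ v ∈ q m, v ∉ q n) ∧
    (∀ n, ∀ v ∈ q n, ∀ k, v ∉ (S k).verts) ∧
    (∀ k, L k ∈ (S k).verts ∧ R k ∈ (S k).verts ∧ B k ∈ (S k).verts) ∧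
    (∀ k, (¬ ∃ n, α n = k ∧ 1 ≤ k) → ∃ v, S k = single v) ∧
    (∀ n, 1 ≤ α n → ∃ a b c, a ≠ b ∧ b ≠ c ∧ a ≠ c ∧ S (α n) = triangle a b c) ∧
    (∀ n, 1 ≤ α n → q n ≠ [] →
      L (α n) ≠ R (α n) ∧ L (α n) ≠ B (α n) ∧ R (α n) ≠ B (α n)) ∧
    (∀ n, 1 ≤ α n → q n = [] →
      t n ∈ (S (α n)).verts ∧ L (α n) ≠ R (α n) ∧ t n ≠ L (α n) ∧ t n ≠ R (α n)) ∧
    (∀ n, q n ≠ [] → (q n).getLast? = some (t n)) ∧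
    (∀ n, α n = 0 → q n = [] → t n ∈ (S 0).verts) ∧
    G = iUnion S ∪ iUnion (fun k => linkBoth (R k) (L (k + 1))) ∪
        iUnion (fun n => branchGraph (B (α n)) (q n)) ∧
    teeth = Set.range t

/-- `G` is shaped by a comb, with set of teeth `teeth`. -/
def IsShapedByComb (G : DGraph V) (teeth : Set V) : Prop :=
  IsDComb G teeth ∨ IsTriangleComb G teeth

/-- The core of a chain of triangles: triangles `a i, b i, c i` together with
the edges `(a (i+1), a i)` and `(c i, c (i+1))`. -/
def chainCore (a b c : ℕ → V) : DGraph V :=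
  ⟨Set.range a ∪ Set.range b ∪ Set.range c,
   {e | ∃ i, e = (a i, b i) ∨ e = (b i, c i) ∨ e = (c i, a i) ∨
        e = (a (i + 1), a i) ∨ e = (c i, c (i + 1))}⟩

/-- `G` is a chain of triangles with set of teeth `teeth`. -/
def IsChainOfTriangles (G : DGraph V) (teeth : Set V) : Prop :=
  ∃ (a b c : ℕ → V) (q : ℕ → List V),
    (Function.Injective fun p : ℕ × Fin 3 => ![a, b, c] p.2 p.1) ∧
    (∀ i, (q i).Nodup ∧ (q i).head? = some (b i)) ∧
    (∀ i, ∀ v ∈ (q i).tail, ∀ j, v ≠ a j ∧ v ≠ b j ∧ v ≠ c j) ∧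
    (∀ i j, i ≠ j → ∀ v ∈ q i, v ∉ q j) ∧
    G = chainCore a b c ∪ iUnion (fun i => doubleOfList (q i)) ∧
    teeth = {v | ∃ i, (q i).getLast? = some v}

/-- `G` is a subdivided in-star with centre (root) `c` and all edges directed
towards `c`; it has infinitely many leaves and `teeth` is its set of leaves. -/
def IsSubdividedInStar (G : DGraph V) (teeth : Set V) : Prop :=
  ∃ (c : V) (q : ℕ → List V),
    (∀ n, (q n).Nodup ∧ (q n).getLast? = some c ∧ 2 ≤ (q n).length) ∧
    (∀ m n, m ≠ n → ∀ v, v ∈ q m → v ∈ q n → v = c) ∧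
    G = iUnion (fun n => ofList (q n)) ∧
    teeth = {v | ∃ n, (q n).head? = some v}

/-- `G` is a subdivided out-star. -/
def IsSubdividedOutStar (G : DGraph V) (teeth : Set V) : Prop :=
  IsSubdividedInStar G.reverse teeth

/-- `G = 𝒟(K_{1,∞})`. -/
def IsDInfiniteStar (G : DGraph V) : Prop :=
  ∃ (c : V) (g : ℕ → V), Function.Injective g ∧ (∀ n, g n ≠ c) ∧
    G = ⟨insert c (Set.range g), {e | ∃ n, e = (c, g n) ∨ e = (g n, c)}⟩

/-- `G = 𝒟(R)` for an undirected ray `R`. -/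
def IsDoubleRayGraph (G : DGraph V) : Prop :=
  ∃ f : ℕ → V, Function.Injective f ∧ G = doubleRay f

/-- `G` is a subdivision of a dominated directed ray (parallel edges being
collapsed): the ray `f`, its original vertices sitting at the positions
`α n ≥ 1`, and for each `n` a subdivided dominating edge `p n`. -/
def IsSubdivDominatedRay (G : DGraph V) : Prop :=
  (∃ (f : ℕ → V) (α : ℕ → ℕ) (p : ℕ → List V),
    Function.Injective f ∧ StrictMono α ∧ (∀ n, 1 ≤ α n) ∧
    (∀ n, (p n).Nodup ∧ (p n).head? = some (f (α n)) ∧ (p n).getLast? = some (f 0) ∧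
      2 ≤ (p n).length) ∧
    (∀ n, ∀ v ∈ internals (p n), v ∉ Set.range f) ∧
    (∀ m n, m ≠ n → ∀ v ∈ internals (p m), v ∉ p n) ∧
    G = outRay f ∪ iUnion (fun n => ofList (p n))) ∨
  (∃ (f : ℕ → V) (α : ℕ → ℕ) (p : ℕ → List V),
    Function.Injective f ∧ StrictMono α ∧ (∀ n, 1 ≤ α n) ∧
    (∀ n, (p n).Nodup ∧ (p n).head? = some (f 0) ∧ (p n).getLast? = some (f (α n)) ∧
      2 ≤ (p n).length) ∧
    (∀ n, ∀ v ∈ internals (p n), v ∉ Set.range f) ∧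
    (∀ m n, m ≠ n → ∀ v ∈ internals (p m), v ∉ p n) ∧
    G = inRay f ∪ iUnion (fun n => ofList (p n)))

section Laced

variable [DecidableEq V]

/-- The segment of the path `l` from `x` to `y` (inclusive). -/
def seg (l : List V) (x y : V) : List V :=
  (l.drop (l.idxOf x)).take (l.idxOf y + 1 - l.idxOf x)

/-- `x ≤ y` along the path `l`. -/
def leIn (l : List V) (x y : V) : Prop :=
  x ∈ l ∧ y ∈ l ∧ l.idxOf x ≤ l.idxOf y

/-- `x < y` along the path `l`. -/
def ltIn (l : List V) (x y : V) : Prop :=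
  x ∈ l ∧ y ∈ l ∧ l.idxOf x < l.idxOf y

/-- The directed paths `P` and `Q` are laced. -/
def Laced (P Q : List V) : Prop :=
  (∀ v ∈ P, v ∉ Q) ∨
  ∃ (ℓ : ℕ) (x y : ℕ → V), 1 ≤ ℓ ∧
    (∀ i, 1 ≤ i → i ≤ ℓ → leIn P (x i) (y i) ∧ leIn Q (x i) (y i)) ∧
    (∀ i, 1 ≤ i → i < ℓ → ltIn P (y i) (x (i + 1)) ∧ ltIn Q (y (i + 1)) (x i)) ∧
    (∀ i, 1 ≤ i → i ≤ ℓ → seg P (x i) (y i) = seg Q (x i) (y i)) ∧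
    (∀ i, 1 ≤ i → i < ℓ → ∀ v ∈ internals (seg Q (y (i + 1)) (x i)), v ∉ P) ∧
    (∀ v ∈ Q.take (Q.idxOf (x ℓ) + 1), v ∈ P → v = x ℓ) ∧
    (∀ v ∈ Q.drop (Q.idxOf (y 1)), v ∈ P → v = y 1)

end Laced

/-- The out-ray `f` and the in-ray `g` with common root are knit:
`x i = f (p i) = g (p' i)` and `y i = f (q i) = g (q' i)` are the shared
segments, in the orders required in the paper. -/
def Knit (f g : ℕ → V) : Prop :=
  f 0 = g 0 ∧
  ∃ p q p' q' : ℕ → ℕ,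
    (∀ i, 0 < p i ∧ p i ≤ q i ∧ q i < p (i + 1)) ∧
    (∀ i, 0 < q' i ∧ q' i ≤ p' i ∧ p' i < q' (i + 1)) ∧
    (∀ i, q i - p i = p' i - q' i) ∧
    (∀ i, ∀ k ≤ q i - p i, f (p i + k) = g (p' i - k)) ∧
    (∀ i, ∀ m, p' i < m → m < q' (i + 1) → g m ∉ Set.range f) ∧
    (∀ m, 0 < m → m < q' 0 → g m ∉ Set.range f)

section Contract

variable [DecidableEq V]

/-- The map identifying `v` with `u`. -/
def contractFun (u v : V) : V → V := fun x => if x = v then u else x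

/-- Contracting the edge `(u, v)` of `G` onto the vertex `u`. -/
def contractEdge (G : DGraph V) (u v : V) : DGraph V :=
  ⟨contractFun u v '' G.verts,
   {e | e ≠ (u, u) ∧ ∃ e' ∈ G.edges, e = (contractFun u v e'.1, contractFun u v e'.2)}⟩

end Contract

/-- The edge `(u, v)` of `G` is butterfly contractible. -/
def IsButterflyContractibleEdge (G : DGraph V) (u v : V) : Prop :=
  (u, v) ∈ G.edges ∧
  ((∀ w, (u, w) ∈ G.edges → w = v) ∨ (∀ w, (w, v) ∈ G.edges → w = u))

/-- `G` and `H` are isomorphic directed graphs. -/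
def Isom (G H : DGraph V) : Prop :=
  ∃ φ : V → V, Set.BijOn φ G.verts H.verts ∧
    ∀ u ∈ G.verts, ∀ v ∈ G.verts, ((u, v) ∈ G.edges ↔ (φ u, φ v) ∈ H.edges)

end DGraph

namespace DGraph
variable {V : Type u}

lemma mem_zip_tail_iff {l : List V} {e : V × V} :
    e ∈ l.zip l.tail ↔ ∃ i, l[i]? = some e.1 ∧ l[i+1]? = some e.2 := by
  induction l with
  | nil => simp
  | cons a t ih =>
    cases t with
    | nil =>
      simp only [List.tail_cons, List.zip_nil_right, List.not_mem_nil, false_iff]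
      rintro ⟨i, h1, h2⟩
      have hi : i < 1 := by
        by_contra hx
        rw [List.getElem?_eq_none (by simpa using Nat.le_of_not_lt hx)] at h1
        cases h1
      interval_cases i
      · simp at h2
    | cons b t' =>
      constructor
      · intro hm
        simp only [List.tail_cons, List.zip_cons_cons, List.mem_cons] at hm
        rcases hm with rfl | hm
        · exact ⟨0, rfl, by simp⟩
        · have : e ∈ (b :: t').zip (b :: t').tail := by simpa using hm
          obtain ⟨i, h1, h2⟩ := ih.mp this
          exact ⟨i + 1, by simpa using h1, by simpa using h2⟩
      · rintro ⟨i, h1, h2⟩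
        simp only [List.tail_cons, List.zip_cons_cons, List.mem_cons]
        cases i with
        | zero =>
          simp only [List.getElem?_cons_zero, Option.some.injEq] at h1
          simp only [List.getElem?_cons_succ, List.getElem?_cons_zero,
            Option.some.injEq] at h2
          left
          rw [Prod.ext_iff]
          exact ⟨h1.symm, h2.symm⟩
        | succ j =>
          right
          have : e ∈ (b :: t').zip (b :: t').tail :=
            ih.mpr ⟨j, by simpa using h1, by simpa using h2⟩
          simpa using this

lemma mem_zip_tail_rev {l : List V} {e : V × V}
    (h : e ∈ l.zip l.tail) : (e.2, e.1) ∈ l.reverse.zip l.reverse.tail := by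
  rw [mem_zip_tail_iff] at h ⊢
  obtain ⟨i, h1, h2⟩ := h
  have hi1 : i + 1 < l.length := (List.getElem?_eq_some_iff.mp h2).1
  refine ⟨l.length - 1 - (i + 1), ?_, ?_⟩
  · rw [List.getElem?_reverse (by omega)]
    convert h2 using 2
    omega
  · rw [List.getElem?_reverse (by omega)]
    convert h1 using 2
    omega

lemma mem_zip_tail_reverse {l : List V} {e : V × V} :
    e ∈ l.reverse.zip l.reverse.tail ↔ (e.2, e.1) ∈ l.zip l.tail := by
  constructor
  · intro h
    have := mem_zip_tail_rev (l := l.reverse) h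
    simpa using this
  · intro h
    have := mem_zip_tail_rev (l := l) (e := (e.2, e.1)) h
    simpa using this

/-- The segment of `L` from index `s` to index `t` (inclusive). -/
def segIdx (L : List V) (s t : ℕ) : List V := (L.take (t + 1)).drop s

lemma segIdx_getElem? (L : List V) {s t k : ℕ} (h : s + k ≤ t) :
    (segIdx L s t)[k]? = L[s + k]? := by
  unfold segIdx
  rw [List.getElem?_drop, List.getElem?_take, if_pos (by omega)]

lemma segIdx_length (L : List V) {s t : ℕ} (ht : t < L.length) :
    (segIdx L s t).length = t + 1 - s := by
  unfold segIdx
  rw [List.length_drop, List.length_take]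
  omega

lemma segIdx_sublist (L : List V) (s t : ℕ) : (segIdx L s t).Sublist L :=
  ((L.take (t + 1)).drop_sublist s).trans (L.take_sublist (t + 1))

lemma segIdx_head? (L : List V) {s t : ℕ} (hst : s ≤ t) (ht : t < L.length) :
    (segIdx L s t).head? = L[s]? := by
  rw [List.head?_eq_getElem?, segIdx_getElem? L (k := 0) (by omega)]
  simp

lemma segIdx_getLast? (L : List V) {s t : ℕ} (hst : s ≤ t) (ht : t < L.length) :
    (segIdx L s t).getLast? = L[t]? := by
  rw [List.getLast?_eq_getElem?, segIdx_length L ht,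
    segIdx_getElem? L (k := t + 1 - s - 1) (by omega)]
  congr 1
  omega

lemma segIdx_ne_nil (L : List V) {s t : ℕ} (hst : s ≤ t) (ht : t < L.length) :
    segIdx L s t ≠ [] := by
  intro h
  have := segIdx_length L (s := s) ht
  rw [h] at this
  simp at this
  omega

lemma mem_segIdx_iff (L : List V) {s t : ℕ} (ht : t < L.length) {v : V} :
    v ∈ segIdx L s t ↔ ∃ m, s ≤ m ∧ m ≤ t ∧ L[m]? = some v := by
  rw [List.mem_iff_getElem?]
  constructor
  · rintro ⟨k, hk⟩
    have hklt : k < (segIdx L s t).length := (List.getElem?_eq_some_iff.mp hk).1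
    rw [segIdx_length L ht] at hklt
    refine ⟨s + k, by omega, by omega, ?_⟩
    rw [← segIdx_getElem? L (s := s) (t := t) (k := k) (by omega)]
    exact hk
  · rintro ⟨m, h1, h2, h3⟩
    refine ⟨m - s, ?_⟩
    rw [segIdx_getElem? L (s := s) (t := t) (k := m - s) (by omega)]
    convert h3 using 2
    omega

lemma mem_verts_ofList {l : List V} {v : V} : v ∈ (ofList l).verts ↔ v ∈ l := Iff.rfl

lemma mem_edges_ofList {l : List V} {e : V × V} :
    e ∈ (ofList l).edges ↔ e ∈ l.zip l.tail := Iff.rfl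

lemma mem_edges_ofList_segIdx (L : List V) {s t : ℕ} {e : V × V} (ht : t < L.length) :
    e ∈ (ofList (segIdx L s t)).edges ↔
      ∃ m, s ≤ m ∧ m + 1 ≤ t ∧ L[m]? = some e.1 ∧ L[m+1]? = some e.2 := by
  rw [mem_edges_ofList, mem_zip_tail_iff]
  constructor
  · rintro ⟨i, h1, h2⟩
    have hi : i + 1 < (segIdx L s t).length := (List.getElem?_eq_some_iff.mp h2).1
    rw [segIdx_length L ht] at hi
    refine ⟨s + i, by omega, by omega, ?_, ?_⟩
    · rw [← segIdx_getElem? L (s := s) (t := t) (k := i) (by omega)]; exact h1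
    · rw [show s + i + 1 = s + (i + 1) by omega,
        ← segIdx_getElem? L (s := s) (t := t) (k := i + 1) (by omega)]
      exact h2
  · rintro ⟨m, h1, h2, h3, h4⟩
    refine ⟨m - s, ?_, ?_⟩
    · rw [segIdx_getElem? L (s := s) (t := t) (k := m - s) (by omega)]
      convert h3 using 2
      omega
    · rw [segIdx_getElem? L (s := s) (t := t) (k := m - s + 1) (by omega)]
      convert h4 using 2
      omega

lemma getLast?_drop' (l : List V) {i : ℕ} (hi : i < l.length) :
    (l.drop i).getLast? = l.getLast? := by
  rw [List.getLast?_eq_getElem?, List.getLast?_eq_getElem?, List.getElem?_drop,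
    List.length_drop]
  congr 1
  omega

lemma isPathFrom_drop (l : List V) (hnd : l.Nodup) {i : ℕ} (hi : i < l.length) {v r : V}
    (hv : l[i]? = some v) (hr : l.getLast? = some r) :
    IsPathFrom (ofList l) v r (l.drop i) := by
  refine ⟨⟨?_, ?_, ?_, ?_⟩, ?_, ?_⟩
  · intro h
    have := congrArg List.length h
    rw [List.length_drop] at this
    simp at this
    omega
  · exact (l.drop_sublist i).nodup hnd
  · intro w hw
    exact List.mem_of_mem_drop hw
  · intro e he
    rw [mem_zip_tail_iff] at he
    obtain ⟨k, h1, h2⟩ := he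
    rw [List.getElem?_drop] at h1 h2
    rw [mem_edges_ofList, mem_zip_tail_iff]
    exact ⟨i + k, h1, by rw [show i + k + 1 = i + (k + 1) by omega]; exact h2⟩
  · rw [List.head?_drop]
    exact hv
  · rw [getLast?_drop' l hi]
    exact hr

lemma mem_of_getLast?' {l : List V} {r : V} (hr : l.getLast? = some r) : r ∈ l := by
  rw [List.getLast?_eq_getElem?] at hr
  exact List.mem_iff_getElem?.mpr ⟨_, hr⟩

lemma mem_of_head?' {l : List V} {r : V} (hr : l.head? = some r) : r ∈ l := by
  rw [List.head?_eq_getElem?] at hr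
  exact List.mem_iff_getElem?.mpr ⟨_, hr⟩

lemma isInArb_ofList (l : List V) (hnd : l.Nodup) {r : V} (hr : l.getLast? = some r) :
    IsInArborescence (ofList l) r := by
  have hlen : 0 < l.length := by
    cases l with
    | nil => simp at hr
    | cons a t => simp
  have hget : l[l.length - 1]? = some r := by
    rw [← List.getLast?_eq_getElem?]; exact hr
  refine ⟨mem_of_getLast?' hr, ?_, ?_, ?_, ?_⟩
  · intro e he
    rw [mem_edges_ofList, mem_zip_tail_iff] at he
    obtain ⟨i, h1, h2⟩ := he
    exact ⟨List.mem_iff_getElem?.mpr ⟨_, h1⟩, List.mem_iff_getElem?.mpr ⟨_, h2⟩⟩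
  · intro w hw
    rw [mem_edges_ofList, mem_zip_tail_iff] at hw
    obtain ⟨i, h1, h2⟩ := hw
    have hilt : i < l.length := (List.getElem?_eq_some_iff.mp h1).1
    have : i = l.length - 1 :=
      (List.getElem?_inj hilt hnd).mp (h1.trans hget.symm)
    subst this
    rw [List.getElem?_eq_none (by omega)] at h2
    cases h2
  · intro v hv hne
    obtain ⟨i, hi⟩ := List.mem_iff_getElem?.mp hv
    have hilt : i < l.length := (List.getElem?_eq_some_iff.mp hi).1
    have hine : i ≠ l.length - 1 := by
      intro h
      rw [h, hget] at hi
      exact hne (Option.some.inj hi).symm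
    have hi1 : i + 1 < l.length := by omega
    refine ⟨l[i+1], ?_, ?_⟩
    · show (v, l[i+1]) ∈ (ofList l).edges
      rw [mem_edges_ofList, mem_zip_tail_iff]
      exact ⟨i, hi, List.getElem?_eq_getElem hi1⟩
    · intro w' hw'
      rw [mem_edges_ofList, mem_zip_tail_iff] at hw'
      obtain ⟨j, hj1, hj2⟩ := hw'
      have hjlt : j < l.length := (List.getElem?_eq_some_iff.mp hj1).1
      have : j = i := (List.getElem?_inj hjlt hnd).mp (hj1.trans hi.symm)
      subst this
      rw [List.getElem?_eq_getElem hi1] at hj2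
      exact (Option.some.inj hj2).symm
  · intro v hv
    obtain ⟨i, hi⟩ := List.mem_iff_getElem?.mp hv
    have hilt : i < l.length := (List.getElem?_eq_some_iff.mp hi).1
    exact ⟨l.drop i, isPathFrom_drop l hnd hilt hi hr⟩

lemma reverse_ofList (l : List V) : (ofList l).reverse = ofList l.reverse := by
  unfold reverse ofList
  congr 1
  · ext v
    simp [List.mem_reverse]
  · ext e
    simp only [Set.mem_setOf_eq]
    exact mem_zip_tail_reverse.symm

lemma isOutArb_ofList (l : List V) (hnd : l.Nodup) {r : V} (hr : l.head? = some r) :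
    IsOutArborescence (ofList l) r := by
  unfold IsOutArborescence
  rw [reverse_ofList]
  apply isInArb_ofList l.reverse (by simpa using hnd)
  rw [List.getLast?_reverse]
  exact hr

end DGraph

namespace DGraph
variable {V : Type u}

lemma verts_union (G H : DGraph V) : (G ∪ H).verts = G.verts ∪ H.verts := rfl
lemma edges_union (G H : DGraph V) : (G ∪ H).edges = G.edges ∪ H.edges := rfl

lemma main_aux {V : Type u} [DecidableEq V] (a b : V) (P Q : List V)
    (ℓ : ℕ) (α β γ δ : ℕ → ℕ) (hℓ : 1 ≤ ℓ)
    (hPnd : P.Nodup) (hQnd : Q.Nodup)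
    (hPa : P[0]? = some a) (hPb : P[P.length - 1]? = some b)
    (hαβ : ∀ i, 1 ≤ i → i ≤ ℓ → α i ≤ β i)
    (hβα : ∀ i, 1 ≤ i → i < ℓ → β i < α (i+1))
    (hγδ : ∀ i, 1 ≤ i → i ≤ ℓ → γ i ≤ δ i)
    (hδγ : ∀ i, 1 ≤ i → i < ℓ → δ (i+1) < γ i)
    (hβ1 : β 1 = 0) (hβℓ : β ℓ = P.length - 1) (hγℓ : γ ℓ = 0)
    (hδ1 : δ 1 = Q.length - 1)
    (hPlen : 0 < P.length) (hQlen : 0 < Q.length)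
    (hcorr : ∀ i, 1 ≤ i → i ≤ ℓ → δ i - γ i = β i - α i ∧
      ∀ k, k ≤ β i - α i → P[α i + k]? = Q[γ i + k]?)
    (hQnotP : ∀ i, 1 ≤ i → i < ℓ → ∀ m v, δ (i+1) < m → m < γ i →
      Q[m]? = some v → v ∉ P) :
    ∃ H : DGraph V, (DGraph.ofList P ∪ DGraph.ofList Q).IsButterflyMinor H ∧
      DGraph.IsDoublePath H a b := by
  classical
  -- monotonicity of the index sequences
  have hβmono : ∀ i j, 1 ≤ i → i < j → j ≤ ℓ → β i < β j := by
    intro i j h1 hij hj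
    induction j with
    | zero => omega
    | succ j ih =>
      rcases Nat.lt_or_ge i j with hij' | hij'
      · have := ih (by omega) (by omega)
        have h2 : β j < α (j+1) := hβα j (by omega) (by omega)
        have h3 : α (j+1) ≤ β (j+1) := hαβ (j+1) (by omega) hj
        omega
      · have : i = j := by omega
        subst this
        have h2 : β i < α (i+1) := hβα i (by omega) (by omega)
        have h3 : α (i+1) ≤ β (i+1) := hαβ (i+1) (by omega) hj
        omega
  have hαmono : ∀ i j, 1 ≤ i → i < j → j ≤ ℓ → α i < α j := by
    intro i j h1 hij hj
    induction j with
    | zero => omega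
    | succ j ih =>
      rcases Nat.lt_or_ge i j with hij' | hij'
      · have := ih (by omega) (by omega)
        have h2 : β j < α (j+1) := hβα j (by omega) (by omega)
        have h3 : α j ≤ β j := hαβ j (by omega) (by omega)
        omega
      · have : i = j := by omega
        subst this
        have h2 : β i < α (i+1) := hβα i (by omega) (by omega)
        have h3 : α i ≤ β i := hαβ i (by omega) (by omega)
        omega
  have hδanti : ∀ i j, 1 ≤ i → i < j → j ≤ ℓ → δ j < δ i := by
    intro i j h1 hij hj
    induction j with
    | zero => omega
    | succ j ih =>
      rcases Nat.lt_or_ge i j with hij' | hij'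
      · have := ih (by omega) (by omega)
        have h2 : δ (j+1) < γ j := hδγ j (by omega) (by omega)
        have h3 : γ j ≤ δ j := hγδ j (by omega) (by omega)
        omega
      · have : i = j := by omega
        subst this
        have h2 : δ (i+1) < γ i := hδγ i (by omega) (by omega)
        have h3 : γ i ≤ δ i := hγδ i (by omega) (by omega)
        omega
  have hβle : ∀ i, 1 ≤ i → i ≤ ℓ → β i ≤ P.length - 1 := by
    intro i h1 h2
    rcases Nat.lt_or_ge i ℓ with h | h
    · have := hβmono i ℓ h1 h le_rfl
      omega
    · have : i = ℓ := by omega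
      subst this
      omega
  have hδle : ∀ i, 1 ≤ i → i ≤ ℓ → δ i ≤ Q.length - 1 := by
    intro i h1 h2
    rcases Nat.lt_or_ge 1 i with h | h
    · have := hδanti 1 i le_rfl h h2
      omega
    · have : i = 1 := by omega
      subst this
      omega
  have hβlt : ∀ i, 1 ≤ i → i ≤ ℓ → β i < P.length := by
    intro i h1 h2; have := hβle i h1 h2; omega
  have hδlt : ∀ i, 1 ≤ i → i ≤ ℓ → δ i < Q.length := by
    intro i h1 h2; have := hδle i h1 h2; omega
  -- the vertices pv k = P[k], qv m = Q[m]
  set pv : ℕ → V := fun k => P.getD k a with hpv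
  set qv : ℕ → V := fun m => Q.getD m a with hqv
  have hpvk : ∀ k, k < P.length → P[k]? = some (pv k) := by
    intro k hk
    rw [hpv]
    simp [List.getD_eq_getElem _ _ hk, List.getElem?_eq_getElem hk]
  have hqvk : ∀ m, m < Q.length → Q[m]? = some (qv m) := by
    intro m hm
    rw [hqv]
    simp [List.getD_eq_getElem _ _ hm, List.getElem?_eq_getElem hm]
  set yv : ℕ → V := fun i => pv (β i) with hyv
  have hyval : ∀ i, 1 ≤ i → i ≤ ℓ → P[β i]? = some (yv i) := by
    intro i h1 h2
    exact hpvk (β i) (hβlt i h1 h2)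
  -- correspondence between P-indices and Q-indices on shared segments
  have hcorr' : ∀ i, 1 ≤ i → i ≤ ℓ → ∀ m, γ i ≤ m → m ≤ δ i →
      Q[m]? = P[α i + (m - γ i)]? ∧ α i + (m - γ i) ≤ β i := by
    intro i h1 h2 m hm1 hm2
    obtain ⟨hlen, hc⟩ := hcorr i h1 h2
    have hγδi := hγδ i h1 h2
    have hαβi := hαβ i h1 h2
    have hk : m - γ i ≤ β i - α i := by omega
    constructor
    · rw [hc (m - γ i) hk]
      congr 1
      omega
    · omega
  have hxy : ∀ i, 1 ≤ i → i ≤ ℓ → Q[δ i]? = some (yv i) := by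
    intro i h1 h2
    obtain ⟨hc, hle'⟩ := hcorr' i h1 h2 (δ i) (hγδ i h1 h2) le_rfl
    have : α i + (δ i - γ i) = β i := by
      obtain ⟨hlen, _⟩ := hcorr i h1 h2
      have := hαβ i h1 h2
      have := hγδ i h1 h2
      omega
    rw [hc, this]
    exact hyval i h1 h2
  have hx0 : ∀ i, 1 ≤ i → i ≤ ℓ → Q[γ i]? = P[α i]? := by
    intro i h1 h2
    obtain ⟨hc, _⟩ := hcorr' i h1 h2 (γ i) le_rfl (hγδ i h1 h2)
    rw [hc]
    congr 1
    omega
  -- uniqueness of indices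
  have hPinj : ∀ (k k' : ℕ) (v : V), P[k]? = some v → P[k']? = some v → k = k' := by
    intro k k' v h h'
    exact (List.getElem?_inj (List.getElem?_eq_some_iff.mp h).1 hPnd).mp (h.trans h'.symm)
  have hQinj : ∀ (m m' : ℕ) (v : V), Q[m]? = some v → Q[m']? = some v → m = m' := by
    intro m m' v h h'
    exact (List.getElem?_inj (List.getElem?_eq_some_iff.mp h).1 hQnd).mp (h.trans h'.symm)
  -- every common vertex of P and Q lies on a shared segment
  have hKP : ∀ (m : ℕ) (v : V), Q[m]? = some v → v ∈ P →
      ∃ j, 1 ≤ j ∧ j ≤ ℓ ∧ γ j ≤ m ∧ m ≤ δ j := by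
    intro m v hm hvP
    have hmlt : m < Q.length := (List.getElem?_eq_some_iff.mp hm).1
    have key : ∀ d i, 1 ≤ i → i ≤ ℓ → ℓ - i ≤ d → m ≤ δ i →
        ∃ j, 1 ≤ j ∧ j ≤ ℓ ∧ γ j ≤ m ∧ m ≤ δ j := by
      intro d
      induction d with
      | zero =>
        intro i h1 h2 h3 h4
        have : i = ℓ := by omega
        subst this
        exact ⟨i, h1, h2, by omega, h4⟩
      | succ d ih =>
        intro i h1 h2 h3 h4
        by_cases hiℓ : i = ℓ
        · subst hiℓ
          exact ⟨i, h1, h2, by omega, h4⟩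
        · by_cases hγm : γ i ≤ m
          · exact ⟨i, h1, h2, hγm, h4⟩
          · by_cases hδ2 : m ≤ δ (i+1)
            · exact ih (i+1) (by omega) (by omega) (by omega) hδ2
            · exact absurd hvP
                (hQnotP i h1 (by omega) m v (by omega) (by omega) hm)
    exact key ℓ 1 le_rfl hℓ (by omega) (by have := hδ1; omega)
  -- the branch sets
  set sb : ℕ → ℕ := fun i => if i = ℓ then 0 else δ (i+1) + 1 with hsb
  set eb : ℕ → ℕ := fun i => if i = ℓ then β ℓ else α (i+1) - 1 with heb
  have hsbδ : ∀ i, 1 ≤ i → i ≤ ℓ → sb i ≤ δ i := by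
    intro i h1 h2
    rw [hsb]
    by_cases h : i = ℓ
    · simp [h]
    · simp only [if_neg h]
      have := hδγ i h1 (by omega)
      have := hγδ i h1 h2
      omega
  have hβeb : ∀ i, 1 ≤ i → i ≤ ℓ → β i ≤ eb i := by
    intro i h1 h2
    rw [heb]
    by_cases h : i = ℓ
    · simp [h]
    · simp only [if_neg h]
      have := hβα i h1 (by omega)
      omega
  have heblt : ∀ i, 1 ≤ i → i ≤ ℓ → eb i < P.length := by
    intro i h1 h2
    rw [heb]
    by_cases h : i = ℓ
    · simp [h]; omega
    · simp only [if_neg h]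
      have h3 := hβα i h1 (by omega)
      have h4 := hαβ (i+1) (by omega) (by omega)
      have h5 := hβlt (i+1) (by omega) (by omega)
      omega
  set tinL : ℕ → List V := fun i => segIdx Q (sb i) (δ i) with htinL
  set toutL : ℕ → List V := fun i => segIdx P (β i) (eb i) with htoutL
  have hmem_tin : ∀ i (v : V), 1 ≤ i → i ≤ ℓ →
      (v ∈ (ofList (tinL i)).verts ↔ ∃ m, sb i ≤ m ∧ m ≤ δ i ∧ Q[m]? = some v) := by
    intro i v h1 h2
    rw [htinL]
    exact mem_segIdx_iff Q (hδlt i h1 h2)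
  have hmem_tout : ∀ i (v : V), 1 ≤ i → i ≤ ℓ →
      (v ∈ (ofList (toutL i)).verts ↔ ∃ k, β i ≤ k ∧ k ≤ eb i ∧ P[k]? = some v) := by
    intro i v h1 h2
    rw [htoutL]
    exact mem_segIdx_iff P (heblt i h1 h2)
  -- key separation lemma
  have hcross : ∀ i j (v : V), 1 ≤ i → i ≤ ℓ → 1 ≤ j → j ≤ ℓ →
      v ∈ (ofList (tinL i)).verts → v ∈ (ofList (toutL j)).verts →
      i = j ∧ v = yv i := by
    intro i j v hi1 hiℓ hj1 hjℓ hvin hvout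
    obtain ⟨m, hm1, hm2, hm3⟩ := (hmem_tin i v hi1 hiℓ).mp hvin
    obtain ⟨k, hk1, hk2, hk3⟩ := (hmem_tout j v hj1 hjℓ).mp hvout
    have hvP : v ∈ P := List.mem_iff_getElem?.mpr ⟨k, hk3⟩
    obtain ⟨j', hj'1, hj'ℓ, hγm, hmδ⟩ := hKP m v hm3 hvP
    have hij' : j' = i := by
      by_contra hne
      rcases Nat.lt_or_ge j' i with hlt | hge
      · have h2 : δ (j'+1) < γ j' := hδγ j' hj'1 (by omega)
        have h3 : δ i ≤ δ (j'+1) := by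
          rcases Nat.lt_or_ge (j'+1) i with h | h
          · exact (hδanti (j'+1) i (by omega) h hiℓ).le
          · have : j' + 1 = i := by omega
            rw [this]
        omega
      · have hij : i < j' := by omega
        have hiℓ' : i < ℓ := by omega
        have hsbi : sb i = δ (i+1) + 1 := by
          simp only [hsb]
          rw [if_neg (by omega : ¬ i = ℓ)]
        have h3 : δ j' ≤ δ (i+1) := by
          rcases Nat.lt_or_ge (i+1) j' with h | h
          · exact (hδanti (i+1) j' (by omega) h hj'ℓ).le
          · have : i + 1 = j' := by omega
            rw [this]
        omega
    rw [hij'] at hγm hmδ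
    obtain ⟨hc, hle'⟩ := hcorr' i hi1 hiℓ m hγm hmδ
    have hk' : P[α i + (m - γ i)]? = some v := by rw [← hc]; exact hm3
    have hkk : k = α i + (m - γ i) := hPinj k _ v hk3 hk'
    have hkβ : k ≤ β i := by omega
    have hii : i = j := by
      by_contra hne
      rcases Nat.lt_or_ge j i with hlt | hge
      · have hebj : eb j = α (j+1) - 1 := by
          simp only [heb]
          rw [if_neg (by omega : ¬ j = ℓ)]
        have h4 : α (j+1) ≤ α i := by
          rcases Nat.lt_or_ge (j+1) i with h | h
          · exact (hαmono (j+1) i (by omega) h hiℓ).le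
          · have : j + 1 = i := by omega
            rw [this]
        have h5 : 1 ≤ α (j+1) := by
          have := hβα j hj1 (by omega)
          omega
        omega
      · have hij : i < j := by omega
        have h4 : β (i+1) ≤ β j := by
          rcases Nat.lt_or_ge (i+1) j with h | h
          · exact (hβmono (i+1) j (by omega) h hjℓ).le
          · have : i + 1 = j := by omega
            rw [this]
        have h5 : β i < α (i+1) := hβα i hi1 (by omega)
        have h6 : α (i+1) ≤ β (i+1) := hαβ (i+1) (by omega) (by omega)
        omega
    have hkβi : k = β i := by
      rw [← hii] at hk1
      omega
    refine ⟨hii, ?_⟩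
    have hv := hyval i hi1 hiℓ
    rw [hkβi] at hk3
    rw [hk3] at hv
    exact Option.some.inj hv
  -- roots
  have hroot_tin : ∀ i, 1 ≤ i → i ≤ ℓ → yv i ∈ (ofList (tinL i)).verts := by
    intro i h1 h2
    exact (hmem_tin i (yv i) h1 h2).mpr ⟨δ i, hsbδ i h1 h2, le_rfl, hxy i h1 h2⟩
  have hroot_tout : ∀ i, 1 ≤ i → i ≤ ℓ → yv i ∈ (ofList (toutL i)).verts := by
    intro i h1 h2
    exact (hmem_tout i (yv i) h1 h2).mpr ⟨β i, le_rfl, hβeb i h1 h2, hyval i h1 h2⟩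
  -- injectivity of yv
  have hyinj : ∀ i j, 1 ≤ i → i ≤ ℓ → 1 ≤ j → j ≤ ℓ → yv i = yv j → i = j := by
    intro i j hi1 hiℓ hj1 hjℓ hij
    have h1 := hyval i hi1 hiℓ
    have h2 := hyval j hj1 hjℓ
    rw [hij] at h1
    have := hPinj (β i) (β j) (yv j) h1 h2
    by_contra hne
    rcases Nat.lt_or_ge i j with h | h
    · have := hβmono i j hi1 h hjℓ; omega
    · have := hβmono j i hj1 (by omega) hiℓ; omega
  -- the double path
  set Ylist : List V := (List.range ℓ).map (fun j => yv (j+1)) with hYlist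
  have hYget : ∀ j, j < ℓ → Ylist[j]? = some (yv (j+1)) := by
    intro j hj
    rw [hYlist, List.getElem?_map, List.getElem?_range hj]
    rfl
  have hYlen : Ylist.length = ℓ := by rw [hYlist]; simp
  have hYnd : Ylist.Nodup := by
    rw [hYlist]
    refine List.Nodup.map_on ?_ (List.nodup_range (n := ℓ))
    intro i hi j hj hij
    simp only [List.mem_range] at hi hj
    have := hyinj (i+1) (j+1) (by omega) (by omega) (by omega) (by omega) hij
    omega
  have hyv1 : yv 1 = a := by
    have h1 := hyval 1 le_rfl hℓ
    rw [hβ1, hPa] at h1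
    exact (Option.some.inj h1).symm
  have hyvℓ : yv ℓ = b := by
    have h1 := hyval ℓ hℓ le_rfl
    rw [hβℓ, hPb] at h1
    exact (Option.some.inj h1).symm
  have hYhead : Ylist.head? = some a := by
    rw [List.head?_eq_getElem?, hYget 0 (by omega)]
    rw [hyv1]
  have hYlast : Ylist.getLast? = some b := by
    rw [List.getLast?_eq_getElem?, hYlen, hYget (ℓ-1) (by omega)]
    rw [show ℓ - 1 + 1 = ℓ by omega, hyvℓ]
  -- vertex/edge characterization of the double path
  have hHverts : ∀ v : V, v ∈ (doubleOfList Ylist).verts ↔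
      ∃ i, 1 ≤ i ∧ i ≤ ℓ ∧ v = yv i := by
    intro v
    have : (doubleOfList Ylist).verts = {u | u ∈ Ylist} ∪ {u | u ∈ Ylist} := rfl
    rw [this]
    constructor
    · intro hv
      have hv' : v ∈ Ylist := by
        rcases hv with h | h
        · exact h
        · exact h
      rw [List.mem_iff_getElem?] at hv'
      obtain ⟨j, hj⟩ := hv'
      have hjℓ : j < ℓ := by
        have := (List.getElem?_eq_some_iff.mp hj).1
        omega
      rw [hYget j hjℓ] at hj
      exact ⟨j+1, by omega, by omega, (Option.some.inj hj).symm⟩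
    · rintro ⟨i, h1, h2, rfl⟩
      left
      show yv i ∈ Ylist
      rw [List.mem_iff_getElem?]
      exact ⟨i-1, by rw [hYget (i-1) (by omega), show i-1+1 = i by omega]⟩
  have hHedges : ∀ e : V × V, e ∈ (doubleOfList Ylist).edges ↔
      (∃ i, 1 ≤ i ∧ i + 1 ≤ ℓ ∧ e = (yv i, yv (i+1))) ∨
      (∃ i, 1 ≤ i ∧ i + 1 ≤ ℓ ∧ e = (yv (i+1), yv i)) := by
    intro e
    have hfwd : ∀ e' : V × V, e' ∈ (ofList Ylist).edges ↔
        ∃ i, 1 ≤ i ∧ i + 1 ≤ ℓ ∧ e' = (yv i, yv (i+1)) := by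
      intro e'
      rw [mem_edges_ofList, mem_zip_tail_iff]
      constructor
      · rintro ⟨j, h1, h2⟩
        have hj1 : j + 1 < ℓ := by
          have := (List.getElem?_eq_some_iff.mp h2).1
          omega
        rw [hYget j (by omega)] at h1
        rw [hYget (j+1) hj1] at h2
        refine ⟨j+1, by omega, by omega, ?_⟩
        rw [Prod.ext_iff]
        exact ⟨(Option.some.inj h1).symm, by
          rw [show j+1+1 = j+2 from rfl] at h2 ⊢
          exact (Option.some.inj h2).symm⟩
      · rintro ⟨i, h1, h2, rfl⟩
        refine ⟨i - 1, ?_, ?_⟩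
        · rw [hYget (i-1) (by omega), show i-1+1 = i by omega]
        · rw [show i-1+1 = i by omega, hYget i (by omega)]
    have : (doubleOfList Ylist).edges =
        (ofList Ylist).edges ∪ (ofList Ylist).reverse.edges := rfl
    rw [this]
    constructor
    · intro he
      rcases he with h | h
      · exact Or.inl ((hfwd e).mp h)
      · have h' : (e.2, e.1) ∈ (ofList Ylist).edges := h
        obtain ⟨i, h1, h2, h3⟩ := (hfwd (e.2, e.1)).mp h'
        right
        refine ⟨i, h1, h2, ?_⟩
        rw [Prod.ext_iff] at h3 ⊢
        exact ⟨h3.2, h3.1⟩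
    · intro he
      rcases he with ⟨i, h1, h2, rfl⟩ | ⟨i, h1, h2, rfl⟩
      · exact Or.inl ((hfwd _).mpr ⟨i, h1, h2, rfl⟩)
      · right
        show ((yv (i+1), yv i).2, (yv (i+1), yv i).1) ∈ (ofList Ylist).edges
        exact (hfwd _).mpr ⟨i, h1, h2, rfl⟩
  -- the index function
  set iOf : V → ℕ :=
    fun v => if h : ∃ i, 1 ≤ i ∧ i ≤ ℓ ∧ yv i = v then h.choose else 0 with hiOf
  have hiOf_spec : ∀ i, 1 ≤ i → i ≤ ℓ → iOf (yv i) = i := by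
    intro i h1 h2
    have hex : ∃ j, 1 ≤ j ∧ j ≤ ℓ ∧ yv j = yv i := ⟨i, h1, h2, rfl⟩
    rw [hiOf]
    simp only
    rw [dif_pos hex]
    exact hyinj _ i hex.choose_spec.1 hex.choose_spec.2.1 h1 h2 hex.choose_spec.2.2
  -- subgraph facts
  have hsub_tinQ : ∀ i, 1 ≤ i → i ≤ ℓ → ofList (tinL i) ⊆ ofList Q := by
    intro i h1 h2
    constructor
    · intro u hu
      obtain ⟨m, _, _, hm⟩ := (hmem_tin i u h1 h2).mp hu
      exact List.mem_iff_getElem?.mpr ⟨m, hm⟩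
    · intro e he
      simp only [htinL] at he
      rw [mem_edges_ofList_segIdx Q (hδlt i h1 h2)] at he
      obtain ⟨m, _, _, h3, h4⟩ := he
      rw [mem_edges_ofList, mem_zip_tail_iff]
      exact ⟨m, h3, h4⟩
  have hsub_toutP : ∀ i, 1 ≤ i → i ≤ ℓ → ofList (toutL i) ⊆ ofList P := by
    intro i h1 h2
    constructor
    · intro u hu
      obtain ⟨k, _, _, hk⟩ := (hmem_tout i u h1 h2).mp hu
      exact List.mem_iff_getElem?.mpr ⟨k, hk⟩
    · intro e he
      simp only [htoutL] at he
      rw [mem_edges_ofList_segIdx P (heblt i h1 h2)] at he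
      obtain ⟨k, _, _, h3, h4⟩ := he
      rw [mem_edges_ofList, mem_zip_tail_iff]
      exact ⟨k, h3, h4⟩
  have Hsub : ∀ i, 1 ≤ i → i ≤ ℓ →
      (ofList (tinL i) ∪ ofList (toutL i)) ⊆ (ofList P ∪ ofList Q) := by
    intro i h1 h2
    obtain ⟨hv1, he1⟩ := hsub_tinQ i h1 h2
    obtain ⟨hv2, he2⟩ := hsub_toutP i h1 h2
    constructor
    · intro u hu
      rcases hu with hu | hu
      · exact Or.inr (hv1 hu)
      · exact Or.inl (hv2 hu)
    · intro e he
      rcases he with he | he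
      · exact Or.inr (he1 he)
      · exact Or.inl (he2 he)
  have Hdisj : ∀ i j, 1 ≤ i → i ≤ ℓ → 1 ≤ j → j ≤ ℓ → i ≠ j →
      ((ofList (tinL i) ∪ ofList (toutL i)).verts ∩
        (ofList (tinL j) ∪ ofList (toutL j)).verts) = ∅ := by
    intro i j hi1 hiℓ hj1 hjℓ hne
    have htt : ∀ i' j' (u : V), 1 ≤ i' → i' < j' → j' ≤ ℓ →
        u ∈ (ofList (tinL i')).verts → u ∈ (ofList (tinL j')).verts → False := by
      intro i' j' u h1 h2 h3 hu1 hu2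
      obtain ⟨m, hm1, hm2, hm3⟩ := (hmem_tin i' u h1 (by omega)).mp hu1
      obtain ⟨m', hm1', hm2', hm3'⟩ := (hmem_tin j' u (by omega) h3).mp hu2
      have hmm := hQinj m m' u hm3 hm3'
      have hsbi' : sb i' = δ (i'+1) + 1 := by
        simp only [hsb]
        rw [if_neg (by omega : ¬ i' = ℓ)]
      have hδj : δ j' ≤ δ (i'+1) := by
        rcases Nat.lt_or_ge (i'+1) j' with h | h
        · exact (hδanti (i'+1) j' (by omega) h h3).le
        · have h' : i'+1 = j' := by omega
          rw [h']
      omega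
    have hoo : ∀ i' j' (u : V), 1 ≤ i' → i' < j' → j' ≤ ℓ →
        u ∈ (ofList (toutL i')).verts → u ∈ (ofList (toutL j')).verts → False := by
      intro i' j' u h1 h2 h3 hu1 hu2
      obtain ⟨k, hk1, hk2, hk3⟩ := (hmem_tout i' u h1 (by omega)).mp hu1
      obtain ⟨k', hk1', hk2', hk3'⟩ := (hmem_tout j' u (by omega) h3).mp hu2
      have hkk := hPinj k k' u hk3 hk3'
      have hebi' : eb i' = α (i'+1) - 1 := by
        simp only [heb]
        rw [if_neg (by omega : ¬ i' = ℓ)]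
      have h4 : α (i'+1) ≤ β (i'+1) := hαβ (i'+1) (by omega) (by omega)
      have h5 : β (i'+1) ≤ β j' := by
        rcases Nat.lt_or_ge (i'+1) j' with h | h
        · exact (hβmono (i'+1) j' (by omega) h h3).le
        · have h' : i'+1 = j' := by omega
          rw [h']
      have h6 : 1 ≤ α (i'+1) := by
        have := hβα i' h1 (by omega)
        omega
      omega
    ext u
    simp only [Set.mem_inter_iff, Set.mem_empty_iff_false, iff_false, not_and]
    intro hu1 hu2
    rcases hu1 with h1' | h1' <;> rcases hu2 with h2' | h2'
    · rcases Nat.lt_or_ge i j with h | h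
      · exact htt i j u hi1 h hjℓ h1' h2'
      · exact htt j i u hj1 (by omega) hiℓ h2' h1'
    · exact hne ((hcross i j u hi1 hiℓ hj1 hjℓ h1' h2').1)
    · exact hne ((hcross j i u hj1 hjℓ hi1 hiℓ h2' h1').1).symm
    · rcases Nat.lt_or_ge i j with h | h
      · exact hoo i j u hi1 h hjℓ h1' h2'
      · exact hoo j i u hj1 (by omega) hiℓ h2' h1'
  have Hroots : ∀ i, 1 ≤ i → i ≤ ℓ →
      (ofList (tinL i)).verts ∩ (ofList (toutL i)).verts = {yv i} := by
    intro i h1 h2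
    ext u
    simp only [Set.mem_inter_iff, Set.mem_singleton_iff]
    constructor
    · rintro ⟨hu1, hu2⟩
      exact (hcross i i u h1 h2 h1 h2 hu1 hu2).2
    · rintro rfl
      exact ⟨hroot_tin i h1 h2, hroot_tout i h1 h2⟩
  have Htin : ∀ i, 1 ≤ i → i ≤ ℓ → IsInArborescence (ofList (tinL i)) (yv i) := by
    intro i h1 h2
    have hnd : (tinL i).Nodup := by
      simp only [htinL]
      exact (segIdx_sublist Q _ _).nodup hQnd
    apply isInArb_ofList _ hnd
    simp only [htinL]
    rw [segIdx_getLast? Q (hsbδ i h1 h2) (hδlt i h1 h2)]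
    exact hxy i h1 h2
  have Htout : ∀ i, 1 ≤ i → i ≤ ℓ → IsOutArborescence (ofList (toutL i)) (yv i) := by
    intro i h1 h2
    have hnd : (toutL i).Nodup := by
      simp only [htoutL]
      exact (segIdx_sublist P _ _).nodup hPnd
    apply isOutArb_ofList _ hnd
    simp only [htoutL]
    rw [segIdx_head? P (hβeb i h1 h2) (heblt i h1 h2)]
    exact hyval i h1 h2
  refine ⟨doubleOfList Ylist, ⟨⟨
      fun v => ofList (tinL (iOf v)) ∪ ofList (toutL (iOf v)),
      fun v => ofList (tinL (iOf v)),
      fun v => ofList (toutL (iOf v)),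
      fun e => if iOf e.1 < iOf e.2 then (pv (α (iOf e.2) - 1), pv (α (iOf e.2)))
        else (pv (β (iOf e.1)), qv (δ (iOf e.1) + 1)),
      ?_, ?_, ?_, ?_, ?_, ?_, ?_, ?_, ?_⟩⟩, Ylist, hYnd, hYhead, hYlast, rfl⟩
  · -- bag_sub
    intro v hv
    obtain ⟨i, h1, h2, rfl⟩ := (hHverts v).mp hv
    simp only [hiOf_spec i h1 h2]
    exact Hsub i h1 h2
  · -- bag_disjoint
    intro v hv w hw hvw
    obtain ⟨i, h1, h2, rfl⟩ := (hHverts v).mp hv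
    obtain ⟨j, h3, h4, rfl⟩ := (hHverts w).mp hw
    simp only [hiOf_spec i h1 h2, hiOf_spec j h3 h4]
    exact Hdisj i j h1 h2 h3 h4 (fun h => hvw (by rw [h]))
  · -- bag_eq
    intro v hv
    rfl
  · -- tin_arb
    intro v hv
    obtain ⟨i, h1, h2, rfl⟩ := (hHverts v).mp hv
    simp only [hiOf_spec i h1 h2]
    exact Htin i h1 h2
  · -- tout_arb
    intro v hv
    obtain ⟨i, h1, h2, rfl⟩ := (hHverts v).mp hv
    simp only [hiOf_spec i h1 h2]
    exact Htout i h1 h2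
  · -- roots_eq
    intro v hv
    obtain ⟨i, h1, h2, rfl⟩ := (hHverts v).mp hv
    simp only [hiOf_spec i h1 h2]
    exact Hroots i h1 h2
  · -- emap_mem
    intro e he
    rcases (hHedges e).mp he with ⟨i, h1, h2, rfl⟩ | ⟨i, h1, h2, rfl⟩
    · simp only [hiOf_spec i h1 (by omega), hiOf_spec (i+1) (by omega) h2]
      rw [if_pos (by omega)]
      apply Set.mem_union_left
      rw [mem_edges_ofList, mem_zip_tail_iff]
      have hα1i : 1 ≤ α (i+1) := by
        have := hβα i h1 (by omega)
        omega
      have hαlt : α (i+1) < P.length := by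
        have := hαβ (i+1) (by omega) h2
        have := hβlt (i+1) (by omega) h2
        omega
      refine ⟨α (i+1) - 1, ?_, ?_⟩
      · exact hpvk _ (by omega)
      · rw [show α (i+1) - 1 + 1 = α (i+1) by omega]
        exact hpvk _ hαlt
    · simp only [hiOf_spec i h1 (by omega), hiOf_spec (i+1) (by omega) h2]
      rw [if_neg (by omega)]
      apply Set.mem_union_right
      rw [mem_edges_ofList, mem_zip_tail_iff]
      have h3 : δ (i+1) + 1 < Q.length := by
        have := hδγ i h1 (by omega)
        have := hγδ i h1 (by omega)
        have := hδlt i h1 (by omega)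
        omega
      exact ⟨δ (i+1), hxy (i+1) (by omega) h2, hqvk _ h3⟩
  · -- emap_tail
    intro e he
    rcases (hHedges e).mp he with ⟨i, h1, h2, rfl⟩ | ⟨i, h1, h2, rfl⟩
    · simp only [hiOf_spec i h1 (by omega), hiOf_spec (i+1) (by omega) h2]
      rw [if_pos (by omega)]
      apply (hmem_tout i _ h1 (by omega)).mpr
      have hα1i : 1 ≤ α (i+1) := by
        have := hβα i h1 (by omega)
        omega
      have hαlt : α (i+1) < P.length := by
        have := hαβ (i+1) (by omega) h2
        have := hβlt (i+1) (by omega) h2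
        omega
      refine ⟨α (i+1) - 1, by have := hβα i h1 (by omega); omega, ?_,
        hpvk _ (by omega)⟩
      have hebi : eb i = α (i+1) - 1 := by
        simp only [heb]
        rw [if_neg (by omega : ¬ i = ℓ)]
      omega
    · simp only [hiOf_spec i h1 (by omega), hiOf_spec (i+1) (by omega) h2]
      rw [if_neg (by omega)]
      apply (hmem_tout (i+1) _ (by omega) h2).mpr
      exact ⟨β (i+1), le_rfl, hβeb (i+1) (by omega) h2,
        hpvk _ (hβlt (i+1) (by omega) h2)⟩
  · -- emap_head
    intro e he
    rcases (hHedges e).mp he with ⟨i, h1, h2, rfl⟩ | ⟨i, h1, h2, rfl⟩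
    · simp only [hiOf_spec i h1 (by omega), hiOf_spec (i+1) (by omega) h2]
      rw [if_pos (by omega)]
      apply (hmem_tin (i+1) _ (by omega) h2).mpr
      refine ⟨γ (i+1), ?_, hγδ (i+1) (by omega) h2, ?_⟩
      · by_cases hc : i+1 = ℓ
        · simp only [hsb]
          rw [if_pos hc]
          omega
        · have := hδγ (i+1) (by omega) (by omega)
          simp only [hsb]
          rw [if_neg hc]
          omega
      · rw [hx0 (i+1) (by omega) h2]
        exact hpvk _ (by
          have := hαβ (i+1) (by omega) h2
          have := hβlt (i+1) (by omega) h2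
          omega)
    · simp only [hiOf_spec i h1 (by omega), hiOf_spec (i+1) (by omega) h2]
      rw [if_neg (by omega)]
      apply (hmem_tin i _ h1 (by omega)).mpr
      refine ⟨δ (i+1) + 1, ?_, ?_, hqvk _ ?_⟩
      · simp only [hsb]
        rw [if_neg (by omega : ¬ i = ℓ)]
      · have := hδγ i h1 (by omega)
        have := hγδ i h1 (by omega)
        omega
      · have := hδγ i h1 (by omega)
        have := hγδ i h1 (by omega)
        have := hδlt i h1 (by omega)
        omega


end DGraph

/-- Let `P` be a directed `a`–`b` path and `Q` a directed
`b`–`a` path in `D` such that `P` and `Q` are laced.  Then the union `P ∪ Q`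
has a butterfly minor that is a double path with endpoints `a` and `b`. -/
theorem laced_union_contracts_to_double_path {V : Type u} [DecidableEq V]
    (D : DGraph V) (a b : V) (P Q : List V)
    (hP : DGraph.IsPathFrom D a b P) (hQ : DGraph.IsPathFrom D b a Q)
    (h : DGraph.Laced P Q) :
    ∃ H : DGraph V, (DGraph.ofList P ∪ DGraph.ofList Q).IsButterflyMinor H ∧
      DGraph.IsDoublePath H a b := by
  classical
  obtain ⟨⟨hPne, hPnd, hPverts, hPedges⟩, hPhead, hPlast⟩ := hP
  obtain ⟨⟨hQne, hQnd, hQverts, hQedges⟩, hQhead, hQlast⟩ := hQ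
  have hPlen : 0 < P.length := List.length_pos_iff.mpr hPne
  have hQlen : 0 < Q.length := List.length_pos_iff.mpr hQne
  have hPa : P[0]? = some a := by rw [← List.head?_eq_getElem?]; exact hPhead
  have hPb : P[P.length - 1]? = some b := by
    rw [← List.getLast?_eq_getElem?]; exact hPlast
  have hQb : Q[0]? = some b := by rw [← List.head?_eq_getElem?]; exact hQhead
  have hQa : Q[Q.length - 1]? = some a := by
    rw [← List.getLast?_eq_getElem?]; exact hQlast
  have haP : a ∈ P := List.mem_iff_getElem?.mpr ⟨0, hPa⟩
  have haQ : a ∈ Q := List.mem_iff_getElem?.mpr ⟨_, hQa⟩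
  have hbP : b ∈ P := List.mem_iff_getElem?.mpr ⟨_, hPb⟩
  have hbQ : b ∈ Q := List.mem_iff_getElem?.mpr ⟨0, hQb⟩
  rcases h with hd | ⟨ℓ, x, y, hℓ, hle, hlt, hseg, hint, hxl, hy1⟩
  · exact absurd haQ (hd a haP)
  have hidx : ∀ (l : List V) (v : V), v ∈ l → l[l.idxOf v]? = some v := by
    intro l v hv
    rw [List.getElem?_eq_getElem (List.idxOf_lt_length_iff.mpr hv)]
    rw [List.getElem_idxOf]
  have hidxu : ∀ (l : List V), l.Nodup → ∀ (k : ℕ) (v : V), l[k]? = some v →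
      l.idxOf v = k := by
    intro l hnd k v hk
    have hv : v ∈ l := List.mem_iff_getElem?.mpr ⟨k, hk⟩
    exact (List.getElem?_inj (List.idxOf_lt_length_iff.mpr hv) hnd).mp
      ((hidx l v hv).trans hk.symm)
  have hy1mem : y 1 ∈ Q := (hle 1 le_rfl hℓ).2.2.1
  have hδ1lt : Q.idxOf (y 1) < Q.length := List.idxOf_lt_length_iff.mpr hy1mem
  have hya : y 1 = a := by
    have hmem : a ∈ Q.drop (Q.idxOf (y 1)) := by
      apply DGraph.mem_of_getLast?'
      rw [DGraph.getLast?_drop' Q hδ1lt]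
      exact hQlast
    exact (hy1 a hmem haP).symm
  have hxb : x ℓ = b := by
    have hmem : b ∈ Q.take (Q.idxOf (x ℓ) + 1) := by
      rw [List.mem_iff_getElem?]
      exact ⟨0, by rw [List.getElem?_take, if_pos (by omega)]; exact hQb⟩
    exact (hxl b hmem hbP).symm
  refine DGraph.main_aux a b P Q ℓ (fun i => P.idxOf (x i))
    (fun i => P.idxOf (y i)) (fun i => Q.idxOf (x i))
    (fun i => Q.idxOf (y i)) hℓ hPnd hQnd hPa hPb
    ?_ ?_ ?_ ?_ ?_ ?_ ?_ ?_ hPlen hQlen ?_ ?_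
  · intro i h1 h2
    exact (hle i h1 h2).1.2.2
  · intro i h1 h2
    exact (hlt i h1 h2).1.2.2
  · intro i h1 h2
    exact (hle i h1 h2).2.2.2
  · intro i h1 h2
    exact (hlt i h1 h2).2.2.2
  · show P.idxOf (y 1) = 0
    rw [hya]
    exact hidxu P hPnd 0 a hPa
  · show P.idxOf (y ℓ) = P.length - 1
    have hαℓ : P.idxOf (x ℓ) = P.length - 1 := by
      rw [hxb]
      exact hidxu P hPnd _ b hPb
    have h1 := (hle ℓ hℓ le_rfl).1.2.2
    have h2 : P.idxOf (y ℓ) < P.length :=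
      List.idxOf_lt_length_iff.mpr (hle ℓ hℓ le_rfl).1.2.1
    omega
  · show Q.idxOf (x ℓ) = 0
    rw [hxb]
    exact hidxu Q hQnd 0 b hQb
  · show Q.idxOf (y 1) = Q.length - 1
    rw [hya]
    exact hidxu Q hQnd _ a hQa
  · -- hcorr
    intro i h1 h2
    have hseq := hseg i h1 h2
    have hAB : P.idxOf (x i) ≤ P.idxOf (y i) := (hle i h1 h2).1.2.2
    have hCD : Q.idxOf (x i) ≤ Q.idxOf (y i) := (hle i h1 h2).2.2.2
    have hBlt : P.idxOf (y i) < P.length :=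
      List.idxOf_lt_length_iff.mpr (hle i h1 h2).1.2.1
    have hDlt : Q.idxOf (y i) < Q.length :=
      List.idxOf_lt_length_iff.mpr (hle i h1 h2).2.2.1
    simp only [DGraph.seg] at hseq
    have hlen : Q.idxOf (y i) - Q.idxOf (x i) =
        P.idxOf (y i) - P.idxOf (x i) := by
      have hll := congrArg List.length hseq
      rw [List.length_take, List.length_take, List.length_drop,
        List.length_drop] at hll
      omega
    refine ⟨hlen, ?_⟩
    intro k hk
    have hk' : k ≤ P.idxOf (y i) - P.idxOf (x i) := hk
    show P[P.idxOf (x i) + k]? = Q[Q.idxOf (x i) + k]?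
    clear hk
    have hgk := congrArg (fun l => l[k]?) hseq
    beta_reduce at hgk
    rw [List.getElem?_take, if_pos (by omega), List.getElem?_drop,
      List.getElem?_take, if_pos (by omega), List.getElem?_drop] at hgk
    exact hgk
  · -- hQnotP
    intro i h1 h2 m v hm1 hm2 hmv
    have hm1' : Q.idxOf (y (i+1)) < m := hm1
    have hm2' : m < Q.idxOf (x i) := hm2
    have hmv' : Q[m]? = some v := hmv
    clear hm1 hm2 hmv
    have hClt : Q.idxOf (x i) < Q.length :=
      List.idxOf_lt_length_iff.mpr (hle i h1 (by omega)).2.1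
    apply hint i h1 h2 v
    show v ∈ DGraph.internals (DGraph.seg Q (y (i+1)) (x i))
    simp only [DGraph.internals, DGraph.seg]
    rw [List.mem_iff_getElem?]
    refine ⟨m - Q.idxOf (y (i+1)) - 1, ?_⟩
    have hLlen : ((Q.drop (Q.idxOf (y (i+1)))).take
        (Q.idxOf (x i) + 1 - Q.idxOf (y (i+1)))).length =
        Q.idxOf (x i) + 1 - Q.idxOf (y (i+1)) := by
      rw [List.length_take, List.length_drop]
      omega
    have hcond1 : m - Q.idxOf (y (i+1)) - 1 <
        ((Q.drop (Q.idxOf (y (i+1)))).take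
          (Q.idxOf (x i) + 1 - Q.idxOf (y (i+1)))).tail.length - 1 := by
      rw [List.length_tail, hLlen]
      omega
    rw [List.dropLast_eq_take, List.getElem?_take, if_pos hcond1,
      List.getElem?_tail, List.getElem?_take, if_pos (by omega),
      List.getElem?_drop]
    convert hmv' using 2
    omega
end

section
/- Let D be a strongly connected directed graph containing an out-ray R. Then there exists a vertex r ∈ V(R) such that either there is an in-arborescence T rooted at r in D that intersects V(R) exactly in r and in infinitely many leaves of T, or there is an in-ray S rooted at r in D that is knit with the final segment rR. -/
/-!
Common definitions: directed graphs as vertex/edge sets, directed paths and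
walks, rays, arborescences, tree-like models and butterfly minors, laced
paths, knit rays, and the shapes (dominated directed rays, stars, combs,
chains of triangles) from the paper.
-/

universe u

open Classical

namespace DGraph

variable {V : Type u}

private lemma reaches_mem_verts {D : DGraph V} {v r : V} (h : D.Reaches v r) : v ∈ D.verts := by
  obtain ⟨l, ⟨⟨hne, hnd, hmem, hedge⟩, hhead, hlast⟩⟩ := h
  cases l with
  | nil => exact absurd rfl hne
  | cons a t =>
    simp only [List.head?_cons, Option.some.injEq] at hhead
    exact hhead ▸ hmem a List.mem_cons_self

private lemma reaches_self {D : DGraph V} {r : V} (h : r ∈ D.verts) : D.Reaches r r := by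
  refine ⟨[r], ⟨?_, ?_, ?_, ?_⟩, ?_, ?_⟩ <;> simp [h]

private noncomputable def rlen (D : DGraph V) (r v : V) : ℕ :=
  if h : D.Reaches v r then
    Nat.find (p := fun k => ∃ L, D.IsPathFrom v r L ∧ L.length = k)
      ⟨h.choose.length, h.choose, h.choose_spec, rfl⟩
  else 0

private lemma rlen_step {D : DGraph V} {r v : V} (h : D.Reaches v r) (hvr : v ≠ r) :
    ∃ w, (v, w) ∈ D.edges ∧ D.Reaches w r ∧ rlen D r w < rlen D r v := by
  have hspec := Nat.find_spec (p := fun k => ∃ L, D.IsPathFrom v r L ∧ L.length = k)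
      ⟨h.choose.length, h.choose, h.choose_spec, rfl⟩
  obtain ⟨L, ⟨⟨hne, hnd, hmem, hedge⟩, hhead, hlast⟩, hlen⟩ := hspec
  cases L with
  | nil => exact absurd rfl hne
  | cons a t =>
    simp only [List.head?_cons, Option.some.injEq] at hhead
    subst hhead
    cases t with
    | nil =>
      simp only [List.getLast?_singleton, Option.some.injEq] at hlast
      exact absurd hlast hvr
    | cons w t' =>
      have hPw : D.IsPathFrom w r (w :: t') := by
        refine ⟨⟨by simp, (List.nodup_cons.mp hnd).2, ?_, ?_⟩, rfl, ?_⟩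
        · exact fun x hx => hmem x (List.mem_cons_of_mem _ hx)
        · intro e he
          exact hedge e (by simpa using Or.inr he)
        · simpa using hlast
      have hw : D.Reaches w r := ⟨_, hPw⟩
      refine ⟨w, ?_, hw, ?_⟩
      · exact hedge (a, w) (by simp)
      · have h1 : rlen D r w ≤ t'.length + 1 := by
          rw [rlen, dif_pos hw]
          exact Nat.find_le ⟨w :: t', hPw, by simp⟩
        have h2 : rlen D r a = t'.length + 2 := by
          rw [rlen, dif_pos h]
          simpa using hlen.symm
        omega

private structure Skel (D : DGraph V) (r : V) where
  nxt : V → V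
  dep : V → ℕ
  fix : nxt r = r
  edge : ∀ v, D.Reaches v r → v ≠ r → (v, nxt v) ∈ D.edges
  reach : ∀ v, D.Reaches v r → D.Reaches (nxt v) r
  dec : ∀ v, D.Reaches v r → v ≠ r → dep (nxt v) < dep v

private noncomputable def mkSkel (D : DGraph V) (r : V) : Skel D r where
  nxt v := if h : D.Reaches v r ∧ v ≠ r then (rlen_step h.1 h.2).choose else v
  dep := rlen D r
  fix := dif_neg (by simp)
  edge v hv hr := by
    rw [dif_pos ⟨hv, hr⟩]; exact (rlen_step hv hr).choose_spec.1
  reach v hv := by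
    by_cases h : D.Reaches v r ∧ v ≠ r
    · rw [dif_pos h]; exact (rlen_step h.1 h.2).choose_spec.2.1
    · rw [dif_neg h]; exact hv
  dec v hv hr := by
    rw [dif_pos ⟨hv, hr⟩]; exact (rlen_step hv hr).choose_spec.2.2

section SkelLemmas

variable {D : DGraph V} {r : V} (K : Skel D r)

private lemma Skel.reach_iter {v : V} (hv : D.Reaches v r) (m : ℕ) :
    D.Reaches (K.nxt^[m] v) r := by
  induction m with
  | zero => exact hv
  | succ m ih => rw [Function.iterate_succ_apply']; exact K.reach _ ih

private lemma Skel.stick {v : V} {m : ℕ} (h : K.nxt^[m] v = r) {m' : ℕ} (hm : m ≤ m') :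
    K.nxt^[m'] v = r := by
  obtain ⟨d, rfl⟩ := Nat.exists_eq_add_of_le hm
  induction d with
  | zero => exact h
  | succ d ih =>
    rw [show m + (d+1) = (m + d) + 1 by omega, Function.iterate_succ_apply',
      ih (Nat.le_add_right m d), K.fix]

private lemma Skel.dep_le_succ {v : V} (hv : D.Reaches v r) (i : ℕ) :
    K.dep (K.nxt^[i+1] v) ≤ K.dep (K.nxt^[i] v) := by
  by_cases h : K.nxt^[i] v = r
  · rw [Function.iterate_succ_apply', h, K.fix]
  · exact le_of_lt (by rw [Function.iterate_succ_apply']; exact K.dec _ (K.reach_iter hv i) h)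

private lemma Skel.dep_mono {v : V} (hv : D.Reaches v r) {i j : ℕ} (hij : i ≤ j) :
    K.dep (K.nxt^[j] v) ≤ K.dep (K.nxt^[i] v) := by
  obtain ⟨d, rfl⟩ := Nat.exists_eq_add_of_le hij
  induction d with
  | zero => exact le_rfl
  | succ d ih =>
    rw [show i + (d+1) = (i + d) + 1 by omega]
    exact le_trans (K.dep_le_succ hv _) (ih (Nat.le_add_right i d))

private lemma Skel.dep_lt {v : V} (hv : D.Reaches v r) {i j : ℕ} (hij : i < j)
    (hne : K.nxt^[i] v ≠ r) :
    K.dep (K.nxt^[j] v) < K.dep (K.nxt^[i] v) := by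
  have h1 : K.dep (K.nxt^[j] v) ≤ K.dep (K.nxt^[i+1] v) := K.dep_mono hv hij
  have h2 : K.dep (K.nxt^[i+1] v) < K.dep (K.nxt^[i] v) := by
    rw [Function.iterate_succ_apply']; exact K.dec _ (K.reach_iter hv i) hne
  omega

private lemma Skel.distinct_iter {v : V} (hv : D.Reaches v r) {i j : ℕ} (hij : i < j)
    (heq : K.nxt^[i] v = K.nxt^[j] v) : K.nxt^[i] v = r := by
  by_contra hne
  exact absurd (congrArg K.dep heq.symm) (Nat.ne_of_lt (K.dep_lt hv hij hne))

private lemma Skel.hits {v : V} (hv : D.Reaches v r) : ∃ m, K.nxt^[m] v = r := by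
  have H : ∀ d, ∀ v, K.dep v = d → D.Reaches v r → ∃ m, K.nxt^[m] v = r := by
    intro d
    induction d using Nat.strong_induction_on with
    | _ d ih =>
      intro v hdv hv
      by_cases h : v = r
      · exact ⟨0, h⟩
      · obtain ⟨m, hm⟩ := ih _ (hdv ▸ K.dec v hv h) (K.nxt v) rfl (K.reach v hv)
        exact ⟨m + 1, by rw [Function.iterate_succ_apply]; exact hm⟩
  exact H _ v rfl hv

end SkelLemmas

private def goodSet (nxt : V → V) (f : ℕ → V) (j : ℕ) : Set ℕ :=
  {n | f n ≠ f j ∧ ∃ m, 0 < m ∧ nxt^[m] (f n) = f j ∧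
    ∀ i, 0 < i → i < m → nxt^[i] (f n) ∉ Set.range f}

private lemma isPathFrom_seq {T : DGraph V} (g : ℕ → V) (m : ℕ)
    (hinj : ∀ i j, i ≤ m → j ≤ m → g i = g j → i = j)
    (hv : ∀ i, i ≤ m → g i ∈ T.verts)
    (he : ∀ i, i < m → (g i, g (i + 1)) ∈ T.edges) :
    T.IsPathFrom (g 0) (g m) ((List.range (m + 1)).map g) := by
  refine ⟨⟨?_, ?_, ?_, ?_⟩, ?_, ?_⟩
  · simp
  · refine List.Nodup.map_on ?_ List.nodup_range
    intro x hx y hy hxy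
    exact hinj x y (by simpa using Nat.lt_succ_iff.mp (List.mem_range.mp hx))
      (by simpa using Nat.lt_succ_iff.mp (List.mem_range.mp hy)) hxy
  · intro x hx
    obtain ⟨i, hi, rfl⟩ := List.mem_map.mp hx
    exact hv i (Nat.lt_succ_iff.mp (List.mem_range.mp hi))
  · intro e he'
    obtain ⟨k, hk, hke⟩ := List.mem_iff_getElem.mp he'
    have hk' : k < m := by simpa using hk
    have h1 : ((List.range (m + 1)).map g)[k]'(by simpa using by omega) = g k := by simp
    have h2 : (((List.range (m + 1)).map g).tail)[k]'(by simpa using by omega) = g (k+1) := by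
      rw [List.getElem_tail]; simp
    rw [List.getElem_zip] at hke
    rw [h1, h2] at hke
    exact hke ▸ he k hk'
  · rw [List.range_succ_eq_map]
    simp
  · rw [List.range_succ]
    simp

private lemma out1 {D : DGraph V} {f : ℕ → V} (K : Skel D (f 0))
    (hf : Function.Injective f) (hreach : ∀ n, D.Reaches (f n) (f 0))
    {j : ℕ} (hN : (goodSet K.nxt f j).Infinite) :
    ∃ T : DGraph V, T ⊆ D ∧ T.IsInArborescence (f j) ∧
      (∀ v ∈ T.verts ∩ Set.range f, v = f j ∨ T.IsLeafOfInArb (f j) v) ∧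
      (T.verts ∩ Set.range f).Infinite := by
  classical
  set N := goodSet K.nxt f j with hNdef
  set M : ℕ → ℕ := fun n => if h : ∃ m, K.nxt^[m] (f n) = f j then Nat.find h else 0 with hMdef
  have hMex : ∀ n ∈ N, ∃ m, K.nxt^[m] (f n) = f j := fun n hn => ⟨hn.2.choose, hn.2.choose_spec.2.1⟩
  have hMspec : ∀ n ∈ N, K.nxt^[M n] (f n) = f j := by
    intro n hn
    rw [hMdef]; dsimp only; rw [dif_pos (hMex n hn)]
    exact Nat.find_spec (hMex n hn)
  have hMmin : ∀ n ∈ N, ∀ i, i < M n → K.nxt^[i] (f n) ≠ f j := by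
    intro n hn i hi
    rw [hMdef] at hi; dsimp only at hi; rw [dif_pos (hMex n hn)] at hi
    exact Nat.find_min (hMex n hn) hi
  have hMpos : ∀ n ∈ N, 0 < M n := by
    intro n hn
    rcases Nat.eq_zero_or_pos (M n) with h | h
    · exfalso
      apply hn.1
      have h2 := hMspec n hn
      rw [h] at h2
      simpa using h2
    · exact h
  have hMint : ∀ n ∈ N, ∀ i, 0 < i → i < M n → K.nxt^[i] (f n) ∉ Set.range f := by
    intro n hn i h0 hi
    have hle : M n ≤ hn.2.choose := by
      rw [hMdef]; dsimp only; rw [dif_pos (hMex n hn)]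
      exact Nat.find_le hn.2.choose_spec.2.1
    exact hn.2.choose_spec.2.2 i h0 (lt_of_lt_of_le hi hle)
  set Tv : Set V := {x | ∃ n, n ∈ N ∧ ∃ i, i ≤ M n ∧ K.nxt^[i] (f n) = x} with hTv
  set T : DGraph V := ⟨Tv, {e | e.1 ∈ Tv ∧ e.1 ≠ f j ∧ e.2 = K.nxt e.1}⟩ with hT
  -- every vertex of Tv is reachable and not equal to f 0 unless f j is involved
  have hTreach : ∀ x ∈ Tv, D.Reaches x (f 0) := by
    rintro x ⟨n, hn, i, hi, rfl⟩
    exact K.reach_iter (hreach n) i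
  have hTne0 : ∀ x ∈ Tv, x ≠ f j → x ≠ f 0 := by
    rintro x ⟨n, hn, i, hi, rfl⟩ hne h0
    have h1 : K.nxt^[M n] (f n) = f 0 := K.stick h0 hi
    have h2 : f j = f 0 := by rw [← hMspec n hn]; exact h1
    exact hne (h0.trans h2.symm)
  have hroot : f j ∈ Tv := by
    obtain ⟨n, hn⟩ := hN.nonempty
    exact ⟨n, hn, M n, le_rfl, hMspec n hn⟩
  have hsucc : ∀ x ∈ Tv, x ≠ f j → K.nxt x ∈ Tv := by
    rintro x ⟨n, hn, i, hi, rfl⟩ hne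
    have hilt : i < M n := lt_of_le_of_ne hi (fun h => hne (h ▸ hMspec n hn))
    exact ⟨n, hn, i + 1, hilt, by rw [← Function.iterate_succ_apply' K.nxt i]⟩
  refine ⟨T, ⟨?_, ?_⟩, ⟨hroot, ?_, ?_, ?_, ?_⟩, ?_, ?_⟩
  · -- verts ⊆ D.verts
    exact fun x hx => reaches_mem_verts (hTreach x hx)
  · -- edges ⊆ D.edges
    rintro ⟨x, y⟩ ⟨hx, hne, hy⟩
    dsimp only at hx hne hy
    subst hy
    exact K.edge x (hTreach x hx) (hTne0 x hx hne)
  · -- edge endpoints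
    rintro ⟨x, y⟩ ⟨hx, hne, hy⟩
    dsimp only at *
    exact ⟨hx, hy ▸ hsucc x hx hne⟩
  · -- no out-edge at root
    rintro w ⟨_, hne, _⟩
    exact hne rfl
  · -- unique out-edge
    intro v hv hne
    exact ⟨K.nxt v, ⟨hv, hne, rfl⟩, fun w hw => hw.2.2⟩
  · -- reaches root
    intro x hx
    obtain ⟨n, hn, i, hi, rfl⟩ := hx
    have hex : ∃ m, K.nxt^[m] (K.nxt^[i] (f n)) = f j := by
      refine ⟨M n - i, ?_⟩
      rw [← Function.iterate_add_apply, Nat.sub_add_cancel hi]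
      exact hMspec n hn
    set mv := Nat.find hex with hmv
    have hmv1 : K.nxt^[mv] (K.nxt^[i] (f n)) = f j := Nat.find_spec hex
    have hmv2 : ∀ d, d < mv → K.nxt^[d] (K.nxt^[i] (f n)) ≠ f j := fun d hd => Nat.find_min hex hd
    have hmvle : mv ≤ M n - i := Nat.find_le (by
      rw [← Function.iterate_add_apply, Nat.sub_add_cancel hi]; exact hMspec n hn)
    have key := isPathFrom_seq (T := T) (fun d => K.nxt^[d] (K.nxt^[i] (f n))) mv ?_ ?_ ?_
    · rw [Function.iterate_zero_apply] at key
      rw [hmv1] at key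
      exact ⟨_, key⟩
    · -- injectivity on [0, mv]
      intro d d' hd hd' heq
      rcases Nat.lt_trichotomy d d' with h | h | h
      · exfalso
        have h0 := K.distinct_iter (K.reach_iter (hreach n) i) h heq
        have := K.stick (v := K.nxt^[i] (f n)) h0 (Nat.le_of_lt_succ (Nat.lt_succ_of_le hd))
        -- nxt^[mv] = f 0; but also = f j, so f j = f 0
        have hj0 : f j = f 0 := by rw [← hmv1, K.stick h0 hd]
        exact hmv2 d (lt_of_lt_of_le h hd') (h0.trans hj0.symm)
      · exact h
      · exfalso
        have h0 := K.distinct_iter (K.reach_iter (hreach n) i) h heq.symm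
        have hj0 : f j = f 0 := by rw [← hmv1, K.stick h0 hd']
        exact hmv2 d' (lt_of_lt_of_le h hd) (h0.trans hj0.symm)
    · -- membership
      intro d hd
      refine ⟨n, hn, d + i, ?_, by rw [Function.iterate_add_apply]⟩
      omega
    · -- edges
      intro d hd
      refine ⟨⟨n, hn, d + i, by omega, by rw [Function.iterate_add_apply]⟩, hmv2 d hd, ?_⟩
      dsimp only
      rw [← Function.iterate_succ_apply' K.nxt d]
  · -- root-or-leaf
    rintro x ⟨⟨n, hn, i, hi, rfl⟩, hX⟩
    by_cases hij : K.nxt^[i] (f n) = f j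
    · exact Or.inl hij
    · refine Or.inr ⟨⟨n, hn, i, hi, rfl⟩, hij, ?_⟩
      -- no in-edges
      rintro u ⟨hu, hune, heq⟩
      dsimp only at heq
      -- u ∈ Tv with nxt u = nxt^[i] (f n) ∈ range f
      obtain ⟨n', hn', i', hi', rfl⟩ := hu
      have hilt : i' < M n' := lt_of_le_of_ne hi' (fun h => hune (h ▸ hMspec n' hn'))
      have hX' : K.nxt^[i' + 1] (f n') ∈ Set.range f := by
        rw [Function.iterate_succ_apply', ← heq]; exact hX
      rcases Nat.lt_or_ge (i' + 1) (M n') with h | h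
      · exact hMint n' hn' (i' + 1) (Nat.succ_pos _) h hX'
      · have : i' + 1 = M n' := by omega
        refine hij ?_
        have h3 : K.nxt^[i' + 1] (f n') = f j := by rw [this]; exact hMspec n' hn'
        rw [heq, ← Function.iterate_succ_apply' K.nxt i']
        exact h3
  · -- infinite
    have hsub : f '' N ⊆ T.verts ∩ Set.range f := by
      rintro x ⟨n, hn, rfl⟩
      exact ⟨⟨n, hn, 0, Nat.zero_le _, rfl⟩, ⟨n, rfl⟩⟩
    exact (hN.image (Set.injOn_of_injective hf)).mono hsub

private lemma image_infinite_of_fibers_finite {α β : Type*} {s : Set α} (g : α → β)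
    (hs : s.Infinite) (hfib : ∀ b, {a ∈ s | g a = b}.Finite) : (g '' s).Infinite := by
  intro hfin
  refine hs (Set.Finite.subset (hfin.biUnion (fun b _ => hfib b)) ?_)
  intro a ha
  exact Set.mem_biUnion ⟨a, ha, rfl⟩ ⟨ha, rfl⟩

private lemma finite_fn {f : ℕ → V} (hf : Function.Injective f) (x : V) :
    {n | f n = x}.Finite := by
  apply Set.Subsingleton.finite
  intro a ha b hb
  exact hf (ha.trans hb.symm)

private lemma star {D : DGraph V} {f : ℕ → V} (K : Skel D (f 0))
    (hf : Function.Injective f) (hreach : ∀ n, D.Reaches (f n) (f 0))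
    {v : V} (hv : D.Reaches v (f 0))
    (hA : {n | ∃ m, K.nxt^[m] (f n) = v}.Infinite)
    (hfin : ∀ u, K.nxt u = v → u ≠ v → {n | ∃ m, K.nxt^[m] (f n) = u}.Finite) :
    ∃ j, (goodSet K.nxt f j).Infinite := by
  classical
  have hXex : ∃ m, K.nxt^[m] v ∈ Set.range f := by
    obtain ⟨m, hm⟩ := K.hits hv
    exact ⟨m, by rw [hm]; exact ⟨0, rfl⟩⟩
  set ms := Nat.find hXex with hmsdef
  set w := K.nxt^[ms] v with hwdef
  have hwX : w ∈ Set.range f := Nat.find_spec hXex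
  have hmsmin : ∀ i, i < ms → K.nxt^[i] v ∉ Set.range f := fun i hi => Nat.find_min hXex hi
  obtain ⟨j, hj⟩ := hwX
  have hwX : w ∈ Set.range f := ⟨j, hj⟩
  set A' := {n | ∃ m, K.nxt^[m] (f n) = v} \ ({n | f n = v} ∪ {n | f n = w}) with hA'def
  have hA' : A'.Infinite := hA.diff ((finite_fn hf v).union (finite_fn hf w))
  -- per-n data
  set mm : ℕ → ℕ := fun n => if h : ∃ m, K.nxt^[m] (f n) = v then Nat.find h else 0 with hmmdef
  set Mn : ℕ → ℕ := fun n => ms + mm n with hMndef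
  set istar : ℕ → ℕ :=
    fun n => Nat.findGreatest (fun i => K.nxt^[i] (f n) ∈ Set.range f) (Mn n - 1) with histdef
  set y : ℕ → V := fun n => K.nxt^[istar n] (f n) with hydef
  set e : ℕ → ℕ := fun n => if h : y n ∈ Set.range f then h.choose else 0 with hedef
  have key : ∀ n ∈ A', e n ∈ goodSet K.nxt f j ∧ f (e n) = y n ∧ istar n < mm n ∧
      K.nxt^[mm n] (f n) = v ∧
      (∀ k, 0 < k → k < mm n - istar n → K.nxt^[k] (y n) ≠ v) ∧
      K.nxt^[mm n - istar n] (y n) = v ∧ y n ∈ Set.range f := by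
    rintro n ⟨hn1, hn2⟩
    have hn1' : ∃ m, K.nxt^[m] (f n) = v := hn1
    have hnv : f n ≠ v := fun h => hn2 (Or.inl h)
    have hnw : f n ≠ w := fun h => hn2 (Or.inr h)
    have hmmeq : mm n = Nat.find hn1' := by
      rw [hmmdef]; dsimp only; rw [dif_pos hn1']
    have hm : K.nxt^[mm n] (f n) = v := by
      rw [hmmeq]; exact Nat.find_spec hn1'
    have hmmin : ∀ i, i < mm n → K.nxt^[i] (f n) ≠ v := by
      intro i hi
      rw [hmmeq] at hi
      exact Nat.find_min hn1' hi
    have hmpos : 0 < mm n := by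
      rcases Nat.eq_zero_or_pos (mm n) with h | h
      · exfalso; apply hnv; have h2 := hm; rw [h] at h2; simpa using h2
      · exact h
    have hMnn : K.nxt^[Mn n] (f n) = w := by
      rw [hMndef]; dsimp only
      rw [Function.iterate_add_apply, hm]
    have hMneq : Mn n = ms + mm n := rfl
    have hMpos : 0 < Mn n := by omega
    have hP0 : K.nxt^[0] (f n) ∈ Set.range f := ⟨n, by simp⟩
    have histle : istar n ≤ Mn n - 1 := Nat.findGreatest_le _
    have histlt : istar n < Mn n := by omega
    have histX : y n ∈ Set.range f := by
      rw [hydef]; dsimp only; rw [histdef]; dsimp only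
      exact Nat.findGreatest_spec (P := fun i => K.nxt^[i] (f n) ∈ Set.range f)
        (Nat.zero_le _) hP0
    have hmax : ∀ i, istar n < i → i < Mn n → K.nxt^[i] (f n) ∉ Set.range f := by
      intro i h1 h2
      exact Nat.findGreatest_is_greatest h1 (by omega)
    have hnoearly : ∀ i, i < Mn n → K.nxt^[i] (f n) ≠ w := by
      intro i hi heq
      by_cases hcase : mm n ≤ i
      · have h1 : K.nxt^[i - mm n] v = w := by
          rw [← hm, ← Function.iterate_add_apply, Nat.sub_add_cancel hcase]
          exact heq
        have h2 : i - mm n < ms := by omega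
        exact hmsmin _ h2 (h1 ▸ hwX)
      · push_neg at hcase
        have h0 : K.nxt^[i] (f n) = f 0 := by
          refine K.distinct_iter (hreach n) hi ?_
          rw [heq, hMnn]
        have h1 : K.nxt^[mm n] (f n) = f 0 := K.stick h0 (le_of_lt hcase)
        have hv0 : v = f 0 := by rw [← hm, h1]
        have hms0 : ms = 0 := by
          rw [hmsdef, Nat.find_eq_zero]
          simp only [Function.iterate_zero_apply]
          rw [hv0]; exact ⟨0, rfl⟩
        have hwv : w = v := by rw [hwdef, hms0]; simp
        exact hmmin i (by omega) (heq.trans hwv)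
    have hynw : y n ≠ w := hnoearly _ histlt
    have histm : istar n < mm n := by
      by_contra hc
      push_neg at hc
      have h1 : K.nxt^[istar n - mm n] v ∈ Set.range f := by
        rw [← hm, ← Function.iterate_add_apply, Nat.sub_add_cancel hc]
        exact histX
      refine hmsmin _ (by omega) h1
    have hyv : K.nxt^[mm n - istar n] (y n) = v := by
      rw [hydef]; dsimp only
      rw [← Function.iterate_add_apply, Nat.sub_add_cancel (le_of_lt histm)]
      exact hm
    have hkmin : ∀ k, 0 < k → k < mm n - istar n → K.nxt^[k] (y n) ≠ v := by
      intro k hk1 hk2 hkeq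
      refine hmmin (k + istar n) (by omega) ?_
      rw [Function.iterate_add_apply]
      exact hkeq
    have hfe : f (e n) = y n := by
      rw [hedef]; dsimp only; rw [dif_pos histX]
      exact histX.choose_spec
    refine ⟨⟨?_, Mn n - istar n, by omega, ?_, ?_⟩, hfe, histm, hm, hkmin, hyv, histX⟩
    · rw [hfe, hj]; exact hynw
    · rw [hfe, hj, ← Function.iterate_add_apply, Nat.sub_add_cancel (le_of_lt histlt)]
      exact hMnn
    · intro i hi1 hi2
      rw [hfe, hydef]; dsimp only
      rw [← Function.iterate_add_apply]
      exact hmax _ (by omega) (by omega)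
  -- fibers of y are finite
  have fib : ∀ y0 : V, {n | n ∈ A' ∧ y n = y0}.Finite := by
    intro y0
    rcases Set.eq_empty_or_nonempty {n | n ∈ A' ∧ y n = y0} with hemp | ⟨n0, hn0, hy0⟩
    · rw [hemp]; exact Set.finite_empty
    · obtain ⟨hg0, hfe0, him0, hm0, hkmin0, hyv0, hX0⟩ := key n0 hn0
      have hQ : ∃ k, 0 < k ∧ K.nxt^[k] y0 = v := ⟨mm n0 - istar n0, by omega, hy0 ▸ hyv0⟩
      set d := Nat.find hQ with hddef
      have hdspec := Nat.find_spec hQ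
      have hdmin : ∀ k, k < d → ¬(0 < k ∧ K.nxt^[k] y0 = v) := fun k hk => Nat.find_min hQ hk
      have hd : ∀ n, n ∈ A' → y n = y0 → mm n - istar n = d := by
        intro n hn hyn
        obtain ⟨_, _, him, hm', hkmin', hyv', _⟩ := key n hn
        have h1 : d ≤ mm n - istar n := Nat.find_le ⟨by omega, hyn ▸ hyv'⟩
        rcases Nat.lt_or_ge d (mm n - istar n) with h2 | h2
        · exact absurd (hyn ▸ hdspec.2) (hkmin' d hdspec.1 h2)
        · omega
      set u := K.nxt^[d - 1] y0 with hudef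
      have hdpos : 0 < d := by have := hdspec.1; omega
      have hu : K.nxt u = v := by
        have h6 : d - 1 + 1 = d := by omega
        have h5 : K.nxt^[d - 1 + 1] y0 = v := by rw [h6]; rw [hddef] at h6 ⊢; exact hdspec.2
        rw [hudef, ← Function.iterate_succ_apply' K.nxt (d-1)]
        exact h5
      have hune : u ≠ v := by
        intro hc
        by_cases hd1 : d = 1
        · -- u = y0 = v
          have hy0v : y0 = v := by
            rw [← hc, hudef, hd1]; simp
          -- then w = v and y n0 = v = w contradiction
          have hv0X : v ∈ Set.range f := hy0v ▸ (hy0 ▸ hX0)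
          have hms0 : ms = 0 := by
            rw [hmsdef, Nat.find_eq_zero]
            simpa using hv0X
          have hwv : w = v := by rw [hwdef, hms0]; simp
          obtain ⟨hg, hfe, _, _, _, hyv, _⟩ := key n0 hn0
          apply hg.1
          rw [hfe, hj, hwv, ← hy0v, hy0]
        · exact (hdmin (d - 1) (by omega) ⟨by omega, hc⟩)

      have hsub : {n | n ∈ A' ∧ y n = y0} ⊆ {n | ∃ m, K.nxt^[m] (f n) = u} := by
        rintro n ⟨hn, hyn⟩
        refine ⟨(d - 1) + istar n, ?_⟩
        rw [Function.iterate_add_apply]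
        rw [hudef, ← hyn]
      exact (hfin u hu hune).subset hsub
  refine ⟨j, Set.Infinite.mono ?_ (image_infinite_of_fibers_finite e hA' ?_)⟩
  · rintro x ⟨n, hn, rfl⟩
    exact (key n hn).1
  · intro b
    refine Set.Finite.subset (fib (f b)) ?_
    rintro n ⟨hn, hbn⟩
    exact ⟨hn, by rw [← hbn, (key n hn).2.1]⟩

private lemma comb {D : DGraph V} {f : ℕ → V} (K : Skel D (f 0))
    (hf : Function.Injective f) (hreach : ∀ n, D.Reaches (f n) (f 0))
    (sp : ℕ → V) (hs0 : sp 0 = f 0)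
    (hsn : ∀ k, K.nxt (sp (k + 1)) = sp k) (hne : ∀ k, sp (k + 1) ≠ sp k)
    (hsr : ∀ k, D.Reaches (sp k) (f 0))
    (hAs : ∀ k, {n | ∃ m, K.nxt^[m] (f n) = sp k}.Infinite)
    (hhit : {k | sp k ∈ Set.range f}.Finite) :
    ∃ j, (goodSet K.nxt f j).Infinite := by
  classical
  have hiter : ∀ k d, K.nxt^[d] (sp (k + d)) = sp k := by
    intro k d
    induction d with
    | zero => rfl
    | succ d ih =>
      rw [show k + (d + 1) = (k + d) + 1 by omega, Function.iterate_succ_apply, hsn]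
      exact ih
  have hiter' : ∀ k d, d ≤ k → K.nxt^[d] (sp k) = sp (k - d) := by
    intro k d hd
    have := hiter (k - d) d
    rwa [Nat.sub_add_cancel hd] at this
  have hne0 : ∀ k, sp (k + 1) ≠ f 0 := by
    intro k h
    apply hne k
    have h1 : sp k = f 0 := by rw [← hsn k, h, K.fix]
    rw [h, h1]
  have hdep : ∀ k, K.dep (sp k) < K.dep (sp (k + 1)) := by
    intro k
    have := K.dec (sp (k + 1)) (hsr (k + 1)) (hne0 k)
    rwa [hsn] at this
  have hdmono : StrictMono (fun k => K.dep (sp k)) := strictMono_nat_of_lt_succ hdep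
  have hsinj : Function.Injective sp := fun a b hab => hdmono.injective (congrArg K.dep hab)
  -- last hit on spine
  have hhit0 : 0 ∈ {k | sp k ∈ Set.range f} := by rw [Set.mem_setOf_eq, hs0]; exact ⟨0, rfl⟩
  set Mx := hhit.toFinset.max' ⟨0, hhit.mem_toFinset.mpr hhit0⟩ with hMxdef
  have hMxX : sp Mx ∈ Set.range f := hhit.mem_toFinset.mp (hhit.toFinset.max'_mem _)
  have hMxtop : ∀ k, sp k ∈ Set.range f → k ≤ Mx :=
    fun k hk => hhit.toFinset.le_max' k (hhit.mem_toFinset.mpr hk)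
  obtain ⟨j, hj⟩ := hMxX
  have step : ∀ B, ∃ q, q ∈ goodSet K.nxt f j ∧ B < K.dep (f q) := by
    intro B
    set k := Mx + 1 + B with hkdef
    have hMk : Mx < k := by omega
    have hdk : B ≤ K.dep (sp k) := by
      have h1 : k ≤ K.dep (sp k) := hdmono.le_apply
      omega
    obtain ⟨n, hn⟩ := ((hAs k).diff ((finite_fn hf (sp Mx)).union (finite_fn hf (sp k)))).nonempty
    obtain ⟨hn1, hn2⟩ := hn
    have hn1' : ∃ m, K.nxt^[m] (f n) = sp k := hn1
    have hnv : f n ≠ sp k := fun h => hn2 (Or.inr h)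
    have hnw : f n ≠ sp Mx := fun h => hn2 (Or.inl h)
    set mm := Nat.find hn1' with hmmdef
    have hm : K.nxt^[mm] (f n) = sp k := Nat.find_spec hn1'
    have hmmin : ∀ i, i < mm → K.nxt^[i] (f n) ≠ sp k := fun i hi => Nat.find_min hn1' hi
    have hmpos : 0 < mm := by
      rcases Nat.eq_zero_or_pos mm with h | h
      · exfalso; apply hnv; have h2 := hm; rw [h] at h2; simpa using h2
      · exact h
    set Mn := (k - Mx) + mm with hMndef
    have hMnn : K.nxt^[Mn] (f n) = sp Mx := by
      rw [hMndef, Function.iterate_add_apply, hm, hiter' k (k - Mx) (by omega)]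
      congr 1
      omega
    have hP0 : K.nxt^[0] (f n) ∈ Set.range f := ⟨n, by simp⟩
    set istar := Nat.findGreatest (fun i => K.nxt^[i] (f n) ∈ Set.range f) (Mn - 1) with histdef
    have histle : istar ≤ Mn - 1 := Nat.findGreatest_le _
    have hMpos : 0 < Mn := by omega
    have histlt : istar < Mn := by omega
    have histX : K.nxt^[istar] (f n) ∈ Set.range f := by
      rw [histdef]
      exact Nat.findGreatest_spec (P := fun i => K.nxt^[i] (f n) ∈ Set.range f)
        (Nat.zero_le _) hP0
    have hmax : ∀ i, istar < i → i < Mn → K.nxt^[i] (f n) ∉ Set.range f := by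
      intro i h1 h2
      exact Nat.findGreatest_is_greatest h1 (by omega)
    have hnoearly : ∀ i, i < Mn → K.nxt^[i] (f n) ≠ sp Mx := by
      intro i hi heq
      by_cases hcase : mm ≤ i
      · have h1 : K.nxt^[i - mm] (sp k) = sp Mx := by
          rw [← hm, ← Function.iterate_add_apply, Nat.sub_add_cancel hcase]
          exact heq
        have h2 : i - mm < k - Mx := by omega
        rw [hiter' k (i - mm) (by omega)] at h1
        have := hsinj h1
        omega
      · push_neg at hcase
        have h0 : K.nxt^[i] (f n) = f 0 := by
          refine K.distinct_iter (hreach n) hi ?_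
          rw [heq, hMnn]
        have h1 : K.nxt^[mm] (f n) = f 0 := K.stick h0 (le_of_lt hcase)
        have hk0 : sp k = sp 0 := by rw [← hm, h1, hs0]
        have := hsinj hk0
        omega
    have histm : istar < mm := by
      by_contra hc
      push_neg at hc
      have h1 : K.nxt^[istar - mm] (sp k) ∈ Set.range f := by
        rw [← hm, ← Function.iterate_add_apply, Nat.sub_add_cancel hc]
        exact histX
      rw [hiter' k (istar - mm) (by omega)] at h1
      have := hMxtop _ h1
      omega
    have hyne0 : K.nxt^[istar] (f n) ≠ f 0 := by
      intro h0
      have h1 : K.nxt^[mm] (f n) = f 0 := K.stick h0 (le_of_lt histm)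
      have hk0 : sp k = sp 0 := by rw [← hm, h1, hs0]
      have := hsinj hk0
      omega
    have hdepy : K.dep (sp k) < K.dep (K.nxt^[istar] (f n)) := by
      have := K.dep_lt (hreach n) histm hyne0
      rwa [hm] at this
    obtain ⟨q, hq⟩ := histX
    refine ⟨q, ⟨?_, Mn - istar, by omega, ?_, ?_⟩, ?_⟩
    · rw [hq, hj]
      exact hnoearly _ histlt
    · rw [hq, hj, ← Function.iterate_add_apply, Nat.sub_add_cancel (le_of_lt histlt)]
      exact hMnn
    · intro i hi1 hi2
      rw [hq, ← Function.iterate_add_apply]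
      exact hmax _ (by omega) (by omega)
    · rw [hq]
      omega
  -- build an injective sequence inside goodSet
  set qs : ℕ → ℕ := fun i => Nat.rec (step 0).choose (fun _ prev => (step (K.dep (f prev))).choose) i
    with hqsdef
  have hq0 : qs 0 = (step 0).choose := rfl
  have hqsucc : ∀ i, qs (i + 1) = (step (K.dep (f (qs i)))).choose := fun i => rfl
  have hqmem : ∀ i, qs i ∈ goodSet K.nxt f j := by
    intro i
    cases i with
    | zero => exact (step 0).choose_spec.1
    | succ i => rw [hqsucc]; exact (step _).choose_spec.1
  have hqlt : ∀ i, K.dep (f (qs i)) < K.dep (f (qs (i + 1))) := by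
    intro i
    rw [hqsucc]
    exact (step (K.dep (f (qs i)))).choose_spec.2
  have hqinj : Function.Injective qs := by
    have : StrictMono (fun i => K.dep (f (qs i))) := strictMono_nat_of_lt_succ hqlt
    exact fun a b hab => this.injective (congrArg (fun t => K.dep (f t)) hab)
  exact ⟨j, Set.infinite_of_injective_forall_mem hqinj hqmem⟩

private lemma knit_of_spine {D : DGraph V} {f : ℕ → V}
    (hf : Function.Injective f) (hR : DGraph.outRay f ⊆ D)
    (sp : ℕ → V) (hspV : ∀ k, sp k ∈ D.verts)
    (hspE : ∀ k, (sp (k + 1), sp k) ∈ D.edges)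
    (hspinj : Function.Injective sp)
    (hH : {k | sp k ∈ Set.range f}.Infinite) :
    ∃ n₀ : ℕ, ∃ g : ℕ → V, Function.Injective g ∧ g 0 = f n₀ ∧
      DGraph.inRay g ⊆ D ∧ DGraph.Knit (fun k => f (n₀ + k)) g := by
  classical
  have exgt : ∀ K0 : ℕ, ∃ k0, K0 < k0 ∧ sp k0 ∈ Set.range f := by
    intro K0
    by_contra hcon
    push_neg at hcon
    refine hH ((Set.finite_Iic K0).subset ?_)
    intro k hk
    by_contra hk'
    simp only [Set.mem_Iic, not_le] at hk'
    exact absurd hk (hcon k hk')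
  set hs : ℕ → ℕ := fun t => Nat.rec (Nat.find (exgt 0)) (fun _ prev => Nat.find (exgt prev)) t
    with hhsdef
  have hhX : ∀ t, sp (hs t) ∈ Set.range f := by
    intro t
    cases t with
    | zero => exact (Nat.find_spec (exgt 0)).2
    | succ t => exact (Nat.find_spec (exgt (hs t))).2
  have hhlt : ∀ t, hs t < hs (t + 1) := fun t => (Nat.find_spec (exgt (hs t))).1
  have hbet : ∀ t k, hs t < k → k < hs (t + 1) → sp k ∉ Set.range f := by
    intro t k h1 h2 hk
    exact (Nat.find_min (exgt (hs t)) h2) ⟨h1, hk⟩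
  have hhmono : StrictMono hs := strictMono_nat_of_lt_succ hhlt
  set c : ℕ → ℕ := fun t => (hhX t).choose with hcdef
  have hc : ∀ t, f (c t) = sp (hs t) := fun t => (hhX t).choose_spec
  have hcinj : Function.Injective c := by
    intro t t' htt
    refine hhmono.injective (hspinj ?_)
    rw [← hc t, ← hc t', htt]
  have hWfin : ∀ x : ℕ, {t | c t < x}.Finite :=
    fun x => (Set.finite_Iio x).preimage (Set.injOn_of_injective hcinj)
  set W : ℕ → ℕ := fun x => sSup {t | c t < x} with hWdef
  have hWA : ∀ x : ℕ, (∃ t, c t < x) → c (W x) < x :=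
    fun x hx => Nat.sSup_mem hx ((hWfin x).bddAbove)
  have hWB : ∀ x t : ℕ, W x < t → x ≤ c t := by
    intro x t hlt
    by_contra hc'
    push_neg at hc'
    have h1 : t ≤ W x := le_csSup ((hWfin x).bddAbove) hc'
    omega
  set ts : ℕ → ℕ := fun i => Nat.rec (W (c 0 + 1)) (fun _ prev => W (c (prev + 1) + 1)) i
    with htsdef
  set E : ℕ → ℕ := fun i => c (ts i) with hEdef
  set S : ℕ → ℕ := fun i => c (ts i + 1) with hSdef
  have htsucc : ∀ i, ts (i + 1) = W (S i + 1) := fun i => rfl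
  have hts0 : ts 0 = W (c 0 + 1) := rfl
  have hK2 : ∀ i, ts i + 1 ≤ ts (i + 1) := by
    intro i
    rw [htsucc]
    exact le_csSup ((hWfin _).bddAbove) (by exact Nat.lt_succ_self _)
  have htmono : StrictMono ts := strictMono_nat_of_lt_succ (fun i => by have := hK2 i; omega)
  have hK1 : ∀ i, E (i + 1) ≤ S i := by
    intro i
    have h0 := hWA (S i + 1) ⟨ts i + 1, Nat.lt_succ_self _⟩
    rw [← htsucc i] at h0
    have h1 : E (i + 1) = c (ts (i + 1)) := rfl
    omega
  have hK3 : ∀ i, S i < E (i + 2) := by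
    intro i
    have h1 : W (S i + 1) < ts (i + 2) := by
      rw [← htsucc i]
      exact htmono (show i + 1 < i + 2 by omega)
    have h2 := hWB _ _ h1
    have h3 : E (i + 2) = c (ts (i + 2)) := rfl
    omega
  have hSmono : ∀ i, S i < S (i + 1) := by
    intro i
    have h1 : W (S i + 1) < ts (i + 1) + 1 := by rw [← htsucc i]; omega
    have h2 := hWB _ _ h1
    have h3 : S (i + 1) = c (ts (i + 1) + 1) := rfl
    omega
  have hE0c : E 0 ≤ c 0 := by
    have h0 := hWA (c 0 + 1) ⟨0, Nat.lt_succ_self _⟩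
    rw [← hts0] at h0
    have h1 : E 0 = c (ts 0) := rfl
    omega
  have hE01 : E 0 < E 1 := by
    have h1 : W (c 0 + 1) < ts 1 := by rw [← hts0]; exact htmono (show 0 < 1 by omega)
    have h2 := hWB _ _ h1
    have h3 : E 1 = c (ts 1) := rfl
    omega
  have hE0S0 : E 0 < S 0 := by
    have h1 : W (c 0 + 1) < ts 0 + 1 := by rw [← hts0]; omega
    have h2 := hWB _ _ h1
    have h3 : S 0 = c (ts 0 + 1) := rfl
    omega
  have hEmono : ∀ i, E i < E (i + 1) := by
    intro i
    cases i with
    | zero => exact hE01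
    | succ i =>
      have h1 : E (i + 1) ≤ S i := hK1 i
      have h2 : S i < E (i + 1 + 1) := hK3 i
      omega
  have hEsm : StrictMono E := strictMono_nat_of_lt_succ hEmono
  have hSsm : StrictMono S := strictMono_nat_of_lt_succ hSmono
  have hES : ∀ i, E i ≤ S i := by
    intro i
    cases i with
    | zero => omega
    | succ i =>
      have h1 : E (i + 1) ≤ S i := hK1 i
      have h2 : S i < S (i + 1) := hSmono i
      omega
  set J : ℕ → ℕ := fun i => hs (ts i + 1) - hs (ts i) with hJdef
  have hJpos : ∀ i, 0 < J i := by
    intro i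
    have h1 : hs (ts i) < hs (ts i + 1) := hhmono (Nat.lt_succ_self _)
    have h2 : J i = hs (ts i + 1) - hs (ts i) := rfl
    omega
  set Ri : ℕ → ℕ := fun i => S i - E (i + 1) with hRidef
  set a : ℕ → ℕ := fun i => Nat.rec 0 (fun i' ai => ai + J i' + Ri i') i with hadef
  have hasucc : ∀ i, a (i + 1) = a i + J i + Ri i := fun i => rfl
  have ha0 : a 0 = 0 := rfl
  have hasm : StrictMono a := strictMono_nat_of_lt_succ (fun i => by
    have h1 := hJpos i
    have h2 := hasucc i
    omega)
  have hia : ∀ i, i ≤ a i := fun i => hasm.le_apply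
  set blk : ℕ → ℕ := fun m => Nat.findGreatest (fun i => a i ≤ m) m with hblkdef
  have hblk1 : ∀ m, a (blk m) ≤ m := by
    intro m
    refine Nat.findGreatest_spec (P := fun i => a i ≤ m) (Nat.zero_le m) ?_
    show a 0 ≤ m
    omega
  have hblk2 : ∀ m, m < a (blk m + 1) := by
    intro m
    by_contra hcon
    push_neg at hcon
    have h1 : blk m + 1 ≤ m := le_trans (hia _) hcon
    exact (Nat.findGreatest_is_greatest (Nat.lt_succ_self _) h1) hcon
  have hblkeq : ∀ i m, a i ≤ m → m < a (i + 1) → blk m = i := by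
    intro i m h1 h2
    have h3 : i ≤ blk m := Nat.le_findGreatest (le_trans (hia i) h1) h1
    have h4 : blk m ≤ i := by
      by_contra hcon
      push_neg at hcon
      have : a (i + 1) ≤ a (blk m) := hasm.monotone hcon
      have := hblk1 m
      omega
    omega
  set g : ℕ → V := fun m =>
    if m ≤ a (blk m) + J (blk m) then sp (hs (ts (blk m)) + (m - a (blk m)))
    else f (S (blk m) - (m - (a (blk m) + J (blk m)))) with hgdef
  -- jump lemma
  have hjump : ∀ i δ, δ ≤ J i → g (a i + δ) = sp (hs (ts i) + δ) := by
    intro i δ hδ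
    by_cases hlt : a i + δ < a (i + 1)
    · have hb := hblkeq i (a i + δ) (Nat.le_add_right _ _) hlt
      rw [hgdef]
      dsimp only
      rw [hb, if_pos (by omega)]
      congr 2
      omega
    · push_neg at hlt
      have hax := hasucc i
      have hR0 : Ri i = 0 := by omega
      have hδJ : δ = J i := by omega
      have hmeq : a i + δ = a (i + 1) := by omega
      have hb := hblkeq (i + 1) (a i + δ) (by omega)
        (by have := hasucc (i + 1); have := hJpos (i + 1); omega)
      have hts' : ts (i + 1) = ts i + 1 := by
        refine hcinj ?_
        have h1 : E (i + 1) = S i := by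
          have := hK1 i
          rw [hRidef] at hR0
          dsimp only at hR0
          omega
        rw [hEdef] at h1
        dsimp only at h1
        rw [hSdef] at h1
        exact h1
      rw [hgdef]
      dsimp only
      rw [hb, if_pos (by omega)]
      rw [hts']
      congr 1
      have h5 : hs (ts i) ≤ hs (ts i + 1) := le_of_lt (hhmono (Nat.lt_succ_self _))
      rw [hJdef] at hδJ
      dsimp only at hδJ
      omega
  -- ride lemma
  have hride : ∀ i d, d ≤ Ri i → g (a i + J i + d) = f (S i - d) := by
    intro i d hd
    rcases Nat.eq_zero_or_pos d with rfl | hdpos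
    · rw [Nat.add_zero, hjump i (J i) le_rfl]
      have h5 : hs (ts i) < hs (ts i + 1) := hhmono (Nat.lt_succ_self _)
      have h6 : hs (ts i) + J i = hs (ts i + 1) := by
        rw [hJdef]; dsimp only; omega
      rw [h6, ← hc (ts i + 1), Nat.sub_zero]
    · rcases Nat.lt_or_ge d (Ri i) with hlt | hge
      · have hb := hblkeq i (a i + J i + d) (by omega) (by have := hasucc i; omega)
        rw [hgdef]
        dsimp only
        rw [hb, if_neg (by omega)]
        congr 2
        omega
      · have hdR : d = Ri i := by omega
        have hmeq : a i + J i + d = a (i + 1) := by have := hasucc i; omega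
        have hb := hblkeq (i + 1) (a i + J i + d) (by omega)
          (by have := hasucc (i + 1); have := hJpos (i + 1); omega)
        rw [hgdef]
        dsimp only
        rw [hb, if_pos (by omega)]
        have h7 : a i + J i + d - a (i + 1) = 0 := by omega
        rw [h7, Nat.add_zero, ← hc (ts (i + 1))]
        have h8 : S i - d = E (i + 1) := by
          have := hK1 i
          rw [hRidef] at hdR
          dsimp only at hdR
          omega
        rw [h8]
  -- decomposition
  have hdecomp : ∀ m, (∃ i δ, δ < J i ∧ m = a i + δ) ∨ (∃ i d, d < Ri i ∧ m = a i + J i + d) := by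
    intro m
    have h1 := hblk1 m
    have h2 := hblk2 m
    have h3 := hasucc (blk m)
    rcases Nat.lt_or_ge (m - a (blk m)) (J (blk m)) with h4 | h4
    · exact Or.inl ⟨blk m, m - a (blk m), h4, by omega⟩
    · exact Or.inr ⟨blk m, m - a (blk m) - J (blk m), by omega, by omega⟩
  -- edges of g
  have hedges : ∀ m, (g (m + 1), g m) ∈ D.edges := by
    intro m
    rcases hdecomp m with ⟨i, δ, hδ, rfl⟩ | ⟨i, d, hd, rfl⟩
    · have e1 : g (a i + δ) = sp (hs (ts i) + δ) := hjump i δ (le_of_lt hδ)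
      have e2 : g (a i + δ + 1) = sp (hs (ts i) + (δ + 1)) := by
        rw [show a i + δ + 1 = a i + (δ + 1) by omega]
        exact hjump i (δ + 1) hδ
      rw [e1, e2, show hs (ts i) + (δ + 1) = (hs (ts i) + δ) + 1 by omega]
      exact hspE _
    · have e1 : g (a i + J i + d) = f (S i - d) := hride i d (le_of_lt hd)
      have e2 : g (a i + J i + d + 1) = f (S i - (d + 1)) := by
        rw [show a i + J i + d + 1 = a i + J i + (d + 1) by omega]
        exact hride i (d + 1) hd
      rw [e1, e2]
      have hRS : Ri i ≤ S i := by
        rw [hRidef]; dsimp only; omega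
      have harith : S i - d = (S i - (d + 1)) + 1 := by omega
      rw [harith]
      exact hR.2 ⟨S i - (d + 1), rfl⟩
  have hverts : ∀ m, g m ∈ D.verts := by
    intro m
    rcases hdecomp m with ⟨i, δ, hδ, rfl⟩ | ⟨i, d, hd, rfl⟩
    · rw [hjump i δ (le_of_lt hδ)]; exact hspV _
    · rw [hride i d (le_of_lt hd)]; exact hR.1 ⟨_, rfl⟩
  -- no jump interior point is on the ray
  have hjumpX : ∀ i δ, 0 < δ → δ < J i → sp (hs (ts i) + δ) ∉ Set.range f := by
    intro i δ h1 h2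
    refine hbet (ts i) _ (by omega) ?_
    have h3 : hs (ts i) < hs (ts i + 1) := hhmono (Nat.lt_succ_self _)
    rw [hJdef] at h2
    dsimp only at h2
    omega
  -- jump-vs-ride impossibility
  have hJR : ∀ i δ i' d', δ < J i → d' < Ri i' → sp (hs (ts i) + δ) ≠ f (S i' - d') := by
    intro i δ i' d' hδ hd' heq
    rcases Nat.eq_zero_or_pos δ with rfl | hδpos
    · rw [Nat.add_zero, ← hc (ts i)] at heq
      have heq' : E i = S i' - d' := hf heq
      have hx1 : E (i' + 1) < S i' - d' := by
        have := hK1 i'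
        rw [hRidef] at hd'
        dsimp only at hd'
        omega
      rcases Nat.lt_or_ge i (i' + 2) with hii | hii
      · have h5 : E i ≤ E (i' + 1) := hEsm.monotone (show i ≤ i' + 1 by omega)
        omega
      · have h5 : E (i' + 2) ≤ E i := hEsm.monotone (show i' + 2 ≤ i by omega)
        have h6 := hK3 i'
        have h7 : S i' - d' ≤ S i' := by omega
        omega
    · exact hjumpX i δ hδpos hδ ⟨_, heq.symm⟩
  -- injectivity
  have hinjg : Function.Injective g := by
    intro m m' heq
    rcases hdecomp m with ⟨i, δ, hδ, rfl⟩ | ⟨i, d, hd, rfl⟩ <;>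
      rcases hdecomp m' with ⟨i', δ', hδ', rfl⟩ | ⟨i', d', hd', rfl⟩
    · -- jump jump
      rw [hjump i δ (le_of_lt hδ), hjump i' δ' (le_of_lt hδ')] at heq
      have hidx : hs (ts i) + δ = hs (ts i') + δ' := hspinj heq
      have hii : i = i' := by
        rcases Nat.lt_trichotomy i i' with h | h | h
        · exfalso
          have h1 : hs (ts i) + δ < hs (ts i + 1) := by
            have h3 : hs (ts i) < hs (ts i + 1) := hhmono (Nat.lt_succ_self _)
            rw [hJdef] at hδ
            dsimp only at hδ
            omega
          have h2 : hs (ts i + 1) ≤ hs (ts i') := hhmono.monotone (show ts i + 1 ≤ ts i' by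
            have h4 := hK2 i
            have h5 : ts (i + 1) ≤ ts i' := htmono.monotone (show i + 1 ≤ i' by omega)
            omega)
          omega
        · exact h
        · exfalso
          have h1 : hs (ts i') + δ' < hs (ts i' + 1) := by
            have h3 : hs (ts i') < hs (ts i' + 1) := hhmono (Nat.lt_succ_self _)
            rw [hJdef] at hδ'
            dsimp only at hδ'
            omega
          have h2 : hs (ts i' + 1) ≤ hs (ts i) := hhmono.monotone (show ts i' + 1 ≤ ts i by
            have h4 := hK2 i'
            have h5 : ts (i' + 1) ≤ ts i := htmono.monotone (show i' + 1 ≤ i by omega)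
            omega)
          omega
      subst hii
      omega
    · -- jump ride
      rw [hjump i δ (le_of_lt hδ), hride i' d' (le_of_lt hd')] at heq
      exact absurd heq (hJR i δ i' d' hδ hd')
    · -- ride jump
      rw [hride i d (le_of_lt hd), hjump i' δ' (le_of_lt hδ')] at heq
      exact absurd heq.symm (hJR i' δ' i d hδ' hd)
    · -- ride ride
      rw [hride i d (le_of_lt hd), hride i' d' (le_of_lt hd')] at heq
      have hxx : S i - d = S i' - d' := hf heq
      have hii : i = i' := by
        rcases Nat.lt_trichotomy i i' with h | h | h
        · exfalso
          have hx1 : E (i' + 1) < S i' - d' := by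
            have := hK1 i'
            rw [hRidef] at hd'
            dsimp only at hd'
            omega
          have h5 : E (i + 2) ≤ E (i' + 1) := hEsm.monotone (show i + 2 ≤ i' + 1 by omega)
          have h6 := hK3 i
          have h7 : S i - d ≤ S i := by omega
          omega
        · exact h
        · exfalso
          have hx1 : E (i + 1) < S i - d := by
            have := hK1 i
            rw [hRidef] at hd
            dsimp only at hd
            omega
          have h5 : E (i' + 2) ≤ E (i + 1) := hEsm.monotone (show i' + 2 ≤ i + 1 by omega)
          have h6 := hK3 i'
          have h7 : S i' - d' ≤ S i' := by omega
          omega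
      subst hii
      have hdd : d = d' := by
        have hx1 : Ri i ≤ S i := by rw [hRidef]; dsimp only; omega
        omega
      omega
  -- assemble
  have hg0 : g 0 = f (E 0) := by
    have := hjump 0 0 (Nat.zero_le _)
    rw [ha0, Nat.add_zero, Nat.add_zero] at this
    rw [this, ← hc (ts 0)]
  refine ⟨E 0, g, hinjg, hg0, ⟨?_, ?_⟩, ?_, ?_⟩
  · rintro x ⟨m, rfl⟩
    exact hverts m
  · rintro e ⟨m, rfl⟩
    exact hedges m
  · show f (E 0 + 0) = g 0
    rw [Nat.add_zero, hg0]
  refine ⟨fun i => E (i + 1) - E 0, fun i => S i - E 0, fun i => a (i + 1),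
    fun i => a i + J i, ?_, ?_, ?_, ?_, ?_, ?_⟩
  · intro i
    show 0 < E (i + 1) - E 0 ∧ E (i + 1) - E 0 ≤ S i - E 0 ∧ S i - E 0 < E (i + 1 + 1) - E 0
    have h1 : E 0 < E (i + 1) := hEsm (Nat.succ_pos i)
    have h2 := hK1 i
    have h3 : S i < E (i + 1 + 1) := hK3 i
    refine ⟨by omega, by omega, by omega⟩
  · intro i
    show 0 < a i + J i ∧ a i + J i ≤ a (i + 1) ∧ a (i + 1) < a (i + 1) + J (i + 1)
    have h1 := hJpos i
    have h2 := hasucc i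
    have h3 := hJpos (i + 1)
    have h4 : 0 < a i + J i := by omega
    exact ⟨h4, by omega, by omega⟩
  · intro i
    show (S i - E 0) - (E (i + 1) - E 0) = a (i + 1) - (a i + J i)
    have h1 : E 0 < E (i + 1) := hEsm (Nat.succ_pos i)
    have h2 := hK1 i
    have h3 := hasucc i
    have h4 : Ri i = S i - E (i + 1) := rfl
    omega
  · intro i k hk
    have hk' : k ≤ (S i - E 0) - (E (i + 1) - E 0) := hk
    show f (E 0 + (E (i + 1) - E 0 + k)) = g (a (i + 1) - k)
    have h1 : E 0 < E (i + 1) := hEsm (Nat.succ_pos i)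
    have h2 := hK1 i
    have h3 := hasucc i
    have h4 : Ri i = S i - E (i + 1) := rfl
    have hkR : k ≤ Ri i := by omega
    have h5 : E 0 + (E (i + 1) - E 0 + k) = E (i + 1) + k := by omega
    have h6 : a (i + 1) - k = a i + J i + (Ri i - k) := by omega
    rw [h5, h6, hride i (Ri i - k) (by omega)]
    congr 1
    omega
  · intro i m h1 h2
    have h1' : a (i + 1) < m := h1
    have h2' : m < a (i + 1) + J (i + 1) := h2
    have h3 : m = a (i + 1) + (m - a (i + 1)) := by omega
    rw [h3, hjump (i + 1) (m - a (i + 1)) (by omega)]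
    rintro ⟨k, hk⟩
    exact hjumpX (i + 1) (m - a (i + 1)) (by omega) (by omega) ⟨E 0 + k, hk⟩
  · intro m h1 h2
    have h2' : m < a 0 + J 0 := h2
    have h2'' : m < J 0 := by omega
    have h3 : m = a 0 + m := by omega
    rw [h3, hjump 0 m (by omega)]
    rintro ⟨k, hk⟩
    exact hjumpX 0 m (by omega) (by omega) ⟨E 0 + k, hk⟩

end DGraph

/-- Let `D` be a strongly connected directed graph containing
an out-ray `R` (with vertices `f 0, f 1, …`).  Then there is a vertex
`r = f n₀` of `R` such that either there is an in-arborescence `T` rooted at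
`r` in `D` that intersects `V(R)` exactly in `r` and in infinitely many
leaves of `T`, or there is an in-ray `S` rooted at `r` in `D` that is knit
with the final segment `rR`. -/
theorem in_tree_or_knit_ray {V : Type u} (D : DGraph V)
    (hD : D.StronglyConnected) (f : ℕ → V) (hf : Function.Injective f)
    (hR : DGraph.outRay f ⊆ D) :
    ∃ n₀ : ℕ,
      (∃ T : DGraph V, T ⊆ D ∧ DGraph.IsInArborescence T (f n₀) ∧
        (∀ v ∈ T.verts ∩ Set.range f, v = f n₀ ∨ DGraph.IsLeafOfInArb T (f n₀) v) ∧
        (T.verts ∩ Set.range f).Infinite) ∨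
      (∃ g : ℕ → V, Function.Injective g ∧ g 0 = f n₀ ∧ DGraph.inRay g ⊆ D ∧
        DGraph.Knit (fun k => f (n₀ + k)) g) := by
  classical
  have hfv : ∀ n, f n ∈ D.verts := fun n => hR.1 ⟨n, rfl⟩
  have hreach : ∀ n, D.Reaches (f n) (f 0) := fun n => hD _ (hfv n) _ (hfv 0)
  set K := DGraph.mkSkel D (f 0) with hK
  by_cases hgood : ∃ j, (DGraph.goodSet K.nxt f j).Infinite
  · obtain ⟨j, hj⟩ := hgood
    exact ⟨j, Or.inl (DGraph.out1 K hf hreach hj)⟩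
  · push_neg at hgood
    have hstep : ∀ w, D.Reaches w (f 0) → {n | ∃ m, K.nxt^[m] (f n) = w}.Infinite →
        ∃ u, K.nxt u = w ∧ u ≠ w ∧ D.Reaches u (f 0) ∧
          {n | ∃ m, K.nxt^[m] (f n) = u}.Infinite := by
      intro w hw hAw
      by_contra hcon
      push_neg at hcon
      refine (hgood (DGraph.star K hf hreach hw hAw ?_).choose).not_infinite
        (DGraph.star K hf hreach hw hAw ?_).choose_spec
      all_goals
        intro u hnu hune
        rcases Set.eq_empty_or_nonempty {n | ∃ m, K.nxt^[m] (f n) = u} with he | ⟨n, m, hm⟩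
        · rw [he]; exact Set.finite_empty
        · have hu : D.Reaches u (f 0) := by
            rw [← hm]; exact K.reach_iter (hreach n) m
          rw [← Set.not_infinite]
          exact (hcon u hnu hune hu).not_infinite
    set Z := {w : V // D.Reaches w (f 0) ∧ {n | ∃ m, K.nxt^[m] (f n) = w}.Infinite} with hZ
    have hz0 : D.Reaches (f 0) (f 0) ∧ {n | ∃ m, K.nxt^[m] (f n) = f 0}.Infinite := by
      constructor
      · exact DGraph.reaches_self (hfv 0)
      · refine Set.infinite_of_injective_forall_mem (f := fun n : ℕ => n)
          Function.injective_id ?_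
        intro n
        exact K.hits (hreach n)
    set F : Z → Z := fun z =>
      ⟨(hstep z.1 z.2.1 z.2.2).choose, (hstep z.1 z.2.1 z.2.2).choose_spec.2.2.1,
        (hstep z.1 z.2.1 z.2.2).choose_spec.2.2.2⟩ with hF
    set sp : ℕ → V := fun k => (F^[k] ⟨f 0, hz0⟩).1 with hsp
    have hiter : ∀ k, F^[k + 1] ⟨f 0, hz0⟩ = F (F^[k] ⟨f 0, hz0⟩) :=
      fun k => Function.iterate_succ_apply' F k _
    have hsn : ∀ k, K.nxt (sp (k + 1)) = sp k := by
      intro k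
      rw [hsp]
      dsimp only
      rw [hiter k]
      exact (hstep (F^[k] ⟨f 0, hz0⟩).1 (F^[k] ⟨f 0, hz0⟩).2.1
        (F^[k] ⟨f 0, hz0⟩).2.2).choose_spec.1
    have hne : ∀ k, sp (k + 1) ≠ sp k := by
      intro k
      rw [hsp]
      dsimp only
      rw [hiter k]
      exact (hstep (F^[k] ⟨f 0, hz0⟩).1 (F^[k] ⟨f 0, hz0⟩).2.1
        (F^[k] ⟨f 0, hz0⟩).2.2).choose_spec.2.1
    have hsr : ∀ k, D.Reaches (sp k) (f 0) := fun k => (F^[k] ⟨f 0, hz0⟩).2.1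
    have hspA : ∀ k, {n | ∃ m, K.nxt^[m] (f n) = sp k}.Infinite :=
      fun k => (F^[k] ⟨f 0, hz0⟩).2.2
    have hsp0 : sp 0 = f 0 := rfl
    by_cases hhits : {k | sp k ∈ Set.range f}.Finite
    · exact absurd ((DGraph.comb K hf hreach sp hsp0 hsn hne hsr hspA hhits).choose_spec)
        (hgood _).not_infinite
    · have hne0 : ∀ k, sp (k + 1) ≠ f 0 := by
        intro k h
        apply hne k
        have h1 : sp k = f 0 := by rw [← hsn k, h, K.fix]
        rw [h, h1]
      have hdep : ∀ k, K.dep (sp k) < K.dep (sp (k + 1)) := by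
        intro k
        have := K.dec (sp (k + 1)) (hsr (k + 1)) (hne0 k)
        rwa [hsn k] at this
      have hspinj : Function.Injective sp :=
        fun a b hab => (strictMono_nat_of_lt_succ hdep).injective (congrArg K.dep hab)
      have hspV : ∀ k, sp k ∈ D.verts := fun k => DGraph.reaches_mem_verts (hsr k)
      have hspE : ∀ k, (sp (k + 1), sp k) ∈ D.edges := by
        intro k
        have := K.edge (sp (k + 1)) (hsr (k + 1)) (hne0 k)
        rwa [hsn k] at this
      obtain ⟨n₀, g, h1, h2, h3, h4⟩ :=
        DGraph.knit_of_spine hf hR sp hspV hspE hspinj hhits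
      exact ⟨n₀, Or.inr ⟨g, h1, h2, h3, h4⟩⟩
end
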